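/- arXiv:math/0212405 — 4 statements merged into one kernel-verified Lean document; each statement's English description precedes it below -/
import Mathlib

section
/- If κ is a singular cardinal and there exists γ₀ < κ such that 2^γ = 2^{γ₀} for every cardinal γ with γ₀ ≤ γ < κ, then 2^κ = 2^{γ₀}. -/
open Cardinal Ordinal

theorem bukovsky_hechler (κ γ₀ : Cardinal)
    (hinf : Cardinal.aleph0 ≤ κ) (hsing : κ.ord.cof < κ)
    (hγ₀ : γ₀ < κ)
    (hconst : ∀ γ : Cardinal, γ₀ ≤ γ → γ < κ → (2 : Cardinal) ^ γ = (2 : Cardinal) ^ γ₀) :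
    (2 : Cardinal) ^ κ = (2 : Cardinal) ^ γ₀ := by
  obtain ⟨ι, f, hf, hι⟩ := Ordinal.exists_lsub_cof κ.ord
  set δ : Cardinal := max γ₀ κ.ord.cof with hδ
  have hδκ : δ < κ := max_lt hγ₀ hsing
  have hδinf : ℵ₀ ≤ δ := le_max_of_le_right (Ordinal.aleph0_le_cof.2 (Cardinal.isSuccLimit_ord hinf))
  have h2δ : (2 : Cardinal) ^ δ = (2 : Cardinal) ^ γ₀ := hconst δ (le_max_left _ _) hδκ
  -- each f i < κ.ord
  have hfi : ∀ i, f i < κ.ord := fun i => hf ▸ Ordinal.lt_lsub f i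
  set c : ι → Cardinal := fun i => max δ (f i).card with hc
  have hci : ∀ i, γ₀ ≤ c i := fun i => le_trans (le_max_left _ _) (le_max_left _ _)
  have hciκ : ∀ i, c i < κ := fun i =>
    max_lt hδκ ((Cardinal.lt_ord).1 (hfi i))
  -- κ ≤ sum c
  have hκle : κ ≤ Cardinal.sum c := by
    have h1 : κ = κ.ord.card := (Cardinal.card_ord κ).symm
    rw [h1, ← hf]
    have h2 : (Ordinal.lsub f).card ≤ Cardinal.sum fun i => (Order.succ (f i)).card := by
      exact Ordinal.card_iSup_le_sum_card fun i => Order.succ (f i)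
    refine h2.trans (Cardinal.sum_le_sum _ _ fun i => ?_)
    rw [Ordinal.card_succ]
    calc (f i).card + 1 ≤ c i + c i := by
          refine add_le_add (le_max_right _ _) (one_le_aleph0.trans ?_)
          exact hδinf.trans (le_max_left _ _)
      _ = c i := Cardinal.add_eq_self (hδinf.trans (le_max_left _ _))
  -- 2^κ ≤ 2^γ₀
  have hle : (2 : Cardinal) ^ κ ≤ (2 : Cardinal) ^ γ₀ := by
    calc (2 : Cardinal) ^ κ ≤ (2 : Cardinal) ^ Cardinal.sum c :=
          Cardinal.power_le_power_left two_ne_zero hκle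
      _ = Cardinal.prod fun i => (2 : Cardinal) ^ c i := Cardinal.power_sum 2 c
      _ = Cardinal.prod fun _ : ι => (2 : Cardinal) ^ γ₀ := by
          congr 1; funext i; exact hconst (c i) (hci i) (hciκ i)
      _ = ((2 : Cardinal) ^ γ₀) ^ #ι := Cardinal.prod_const' ι _
      _ = (2 : Cardinal) ^ (γ₀ * #ι) := (Cardinal.power_mul).symm
      _ ≤ (2 : Cardinal) ^ δ := by
          refine Cardinal.power_le_power_left two_ne_zero ?_
          rw [hι]
          calc γ₀ * κ.ord.cof ≤ δ * δ :=
                mul_le_mul' (le_max_left _ _) (le_max_right _ _)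
            _ = δ := Cardinal.mul_eq_self hδinf
      _ = (2 : Cardinal) ^ γ₀ := h2δ
  exact le_antisymm hle (Cardinal.power_le_power_left two_ne_zero hγ₀.le)
end

section
/- If κ is a singular cardinal, i.e. the continuum function is eventually constant below κ (there is γ₀ < κ with 2^γ = 2^{γ₀} for all γ₀ ≤ γ < κ), then 2^κ equals the supremum of 2^γ for γ < κ. -/
open Cardinal Ordinal Function

theorem bukovsky_hechler_sup (κ : Cardinal)
    (hinf : Cardinal.aleph0 ≤ κ) (hsing : κ.ord.cof < κ)
    (hconst : ∃ γ₀ < κ, ∀ γ : Cardinal, γ₀ ≤ γ → γ < κ → (2 : Cardinal) ^ γ = (2 : Cardinal) ^ γ₀) :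
    (2 : Cardinal) ^ κ = ⨆ γ : Set.Iio κ, (2 : Cardinal) ^ (γ : Cardinal) := by
  obtain ⟨γ₀, hγ₀κ, hc⟩ := hconst
  have hlim : Order.IsSuccLimit κ.ord := Cardinal.isSuccLimit_ord hinf
  have hcofinf : ℵ₀ ≤ κ.ord.cof := Ordinal.aleph0_le_cof.2 hlim
  have haleph0lt : ℵ₀ < κ := hcofinf.trans_lt hsing
  -- replace γ₀ by δ := max γ₀ ℵ₀, which is infinite
  set δ : Cardinal := max γ₀ ℵ₀ with hδ
  have hδκ : δ < κ := max_lt hγ₀κ haleph0lt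
  have hδinf : ℵ₀ ≤ δ := le_max_right _ _
  have hcδ : ∀ γ : Cardinal, δ ≤ γ → γ < κ → (2 : Cardinal) ^ γ = (2 : Cardinal) ^ δ := by
    intro γ h1 h2
    rw [hc γ ((le_max_left _ _).trans h1) h2, hc δ (le_max_left _ _) hδκ]
  set c : Cardinal := (2 : Cardinal) ^ δ with hcdef
  -- all powers below κ are bounded by c
  have hbound : ∀ γ : Cardinal, γ < κ → (2 : Cardinal) ^ γ ≤ c := by
    intro γ hγ
    rcases le_or_gt γ δ with h | h
    · exact power_le_power_left two_ne_zero h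
    · exact (hcδ γ h.le hγ).le
  -- c ^ cof = c
  have hpowcof : c ^ κ.ord.cof = c := by
    rw [hcdef, ← power_mul, mul_eq_max hδinf hcofinf]
    exact hcδ _ (le_max_left _ _) (max_lt hδκ hsing)
  -- 2 ^ κ ≤ c
  have hmain : (2 : Cardinal) ^ κ ≤ c := by
    rcases Cardinal.ord_eq κ.out with ⟨r, wo, re⟩
    have hκ : #(Quotient.out κ) = κ := Cardinal.mk_out κ
    have hlim' : Order.IsSuccLimit (type r) := by rw [← re, hκ]; exact hlim
    rcases Ordinal.cof_eq' r hlim' with ⟨S, H, Se⟩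
    have hsum : κ ≤ Cardinal.sum fun a : S => #{ x // r x a } := by
      have h2 : #(Quotient.out κ) ≤ Cardinal.sum fun a : S => #{ x // r x a } := by
        rw [← mk_sigma]
        refine mk_le_of_surjective (f := fun x : Σ a : S, { y // r y a } => x.2.1) ?_
        intro a
        obtain ⟨b, hb, ab⟩ := H a
        exact ⟨⟨⟨b, hb⟩, a, ab⟩, rfl⟩
      exact hκ.symm.trans_le h2
    have hlt : ∀ a : S, #{ y // r y (a : κ.out) } < κ := by
      intro a
      have h1 := typein_lt_type r (a : κ.out)
      rw [← re, lt_ord] at h1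
      rwa [hκ] at h1
    calc (2 : Cardinal) ^ κ
        ≤ 2 ^ Cardinal.sum fun a : S => #{ y // r y a } :=
          power_le_power_left two_ne_zero hsum
      _ = Cardinal.prod fun a : S => (2 : Cardinal) ^ #{ y // r y a } := power_sum _ _
      _ ≤ Cardinal.prod fun _ : S => c := prod_le_prod _ _ fun a => hbound _ (hlt a)
      _ = c ^ #S := prod_const' _ _
      _ = c ^ κ.ord.cof := by rw [Se, ← re, hκ]
      _ = c := hpowcof
  apply le_antisymm
  · refine hmain.trans ?_
    exact le_ciSup (Cardinal.bddAbove_range _) (⟨δ, hδκ⟩ : Set.Iio κ)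
  · exact ciSup_le' fun γ => power_le_power_left two_ne_zero γ.2.le
end

section
/- Silver's theorem: if κ is a singular cardinal of uncountable cofinality and the set {α < κ : 2^α = α⁺} is stationary in κ, then 2^κ = κ⁺. -/
open Ordinal Cardinal Set Order

universe u

/-- `C` is a closed unbounded subset of the ordinal `κ`. -/
def IsClubIn (κ : Ordinal) (C : Set Ordinal) : Prop :=
  C ⊆ Set.Iio κ ∧
  (∀ α < κ, ∃ β ∈ C, α < β) ∧
  (∀ s ⊆ C, s.Nonempty → sSup s < κ → sSup s ∈ C)

/-- `S` is stationary in the ordinal `κ`: it meets every club. -/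
def IsStationaryIn (κ : Ordinal) (S : Set Ordinal) : Prop :=
  S ⊆ Set.Iio κ ∧ ∀ C, IsClubIn κ C → (S ∩ C).Nonempty

lemma sil_bdd {L : Ordinal.{u}} {s : Set Ordinal} (h : s ⊆ Set.Iio L) : BddAbove s :=
  ⟨L, fun x hx => (h hx).le⟩

lemma sil_exists_gt {u : Set Ordinal.{u}} (hne : u.Nonempty) {j : Ordinal} (h : j < sSup u) :
    ∃ i ∈ u, j < i := by
  by_contra hc
  push_neg at hc
  exact absurd (csSup_le hne hc) (not_le.2 h)

lemma sil_nat_sup {L : Ordinal.{u}} (hL : ℵ₀ < L.cof) (a : ℕ → Ordinal) (ha : ∀ n, a n < L) :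
    iSup a < L :=
  Ordinal.iSup_lt_ord_lift (c := L) (by rw [Cardinal.mk_nat, Cardinal.lift_aleph0]; exact hL) ha

/-- a choice function for unbounded sets -/
lemma sil_next {L : Ordinal.{u}} {C : Set Ordinal} (hC1 : C ⊆ Set.Iio L)
    (hC2 : ∀ α < L, ∃ β ∈ C, α < β) :
    ∃ n : Ordinal → Ordinal, ∀ α < L, n α ∈ C ∧ α < n α ∧ n α < L := by
  refine ⟨fun α => if h : α < L then (hC2 α h).choose else 0, fun α h => ?_⟩
  obtain ⟨h1, h2⟩ := (hC2 α h).choose_spec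
  simp only [dif_pos h]
  exact ⟨h1, h2, hC1 h1⟩

lemma sil_club_inter {L : Ordinal.{u}} (hcof : ℵ₀ < L.cof) {C D : Set Ordinal}
    (hC : IsClubIn L C) (hD : IsClubIn L D) : IsClubIn L (C ∩ D) := by
  obtain ⟨hC1, hC2, hC3⟩ := hC
  obtain ⟨hD1, hD2, hD3⟩ := hD
  refine ⟨fun x hx => hC1 hx.1, ?_, ?_⟩
  · intro α hα
    obtain ⟨nC, hnC⟩ := sil_next hC1 hC2
    obtain ⟨nD, hnD⟩ := sil_next hD1 hD2
    set cs : ℕ → Ordinal := fun n => (fun x => nC (nD x))^[n] (nC α) with hcs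
    have key : ∀ x ∈ C, x < L → nC (nD x) ∈ C ∧ nC (nD x) < L ∧ nD x ∈ D ∧ nD x < L ∧
        x < nD x ∧ nD x < nC (nD x) := by
      intro x _ hxL
      obtain ⟨hd1, hd2, hd3⟩ := hnD x hxL
      obtain ⟨hc1, hc2, hc3⟩ := hnC (nD x) hd3
      exact ⟨hc1, hc3, hd1, hd3, hd2, hc2⟩
    have hstep : ∀ n, cs n ∈ C ∧ cs n < L ∧ nD (cs n) ∈ D ∧ nD (cs n) < L ∧
        cs n < nD (cs n) ∧ nD (cs n) < cs (n + 1) := by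
      intro n
      induction n with
      | zero =>
        obtain ⟨ha1, _, ha3⟩ := hnC α hα
        have h0 : cs 0 = nC α := rfl
        have h1 : cs 1 = nC (nD (cs 0)) := Function.iterate_succ_apply' _ 0 _
        obtain ⟨k1, k2, k3, k4, k5, k6⟩ := key (cs 0) (h0 ▸ ha1) (h0 ▸ ha3)
        exact ⟨h0 ▸ ha1, h0 ▸ ha3, k3, k4, k5, h1 ▸ k6⟩
      | succ n ih =>
        obtain ⟨ih1, ih2, ih3, ih4, ih5, ih6⟩ := ih
        have hsn : cs (n + 1) = nC (nD (cs n)) := Function.iterate_succ_apply' _ n _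
        have hmem : cs (n + 1) ∈ C := by rw [hsn]; exact (key _ ih1 ih2).1
        have hlt : cs (n + 1) < L := by rw [hsn]; exact (key _ ih1 ih2).2.1
        obtain ⟨k1, k2, k3, k4, k5, k6⟩ := key _ hmem hlt
        have hsn2 : cs (n + 1 + 1) = nC (nD (cs (n + 1))) := Function.iterate_succ_apply' _ (n+1) _
        exact ⟨hmem, hlt, k3, k4, k5, hsn2 ▸ k6⟩
    set ds : ℕ → Ordinal := fun n => nD (cs n) with hds
    have hdlt : ∀ n, ds n < L := fun n => (hstep n).2.2.2.1
    have hclt : ∀ n, cs n < L := fun n => (hstep n).2.1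
    have hσL : iSup ds < L := sil_nat_sup hcof ds hdlt
    have hbd : BddAbove (Set.range ds) := sil_bdd (by rintro x ⟨n, rfl⟩; exact hdlt n)
    have hbc : BddAbove (Set.range cs) := sil_bdd (by rintro x ⟨n, rfl⟩; exact hclt n)
    have hσeq : sSup (Set.range cs) = iSup ds := by
      apply le_antisymm
      · apply csSup_le (Set.range_nonempty _)
        rintro x ⟨n, rfl⟩
        exact le_trans (hstep n).2.2.2.2.1.le (le_ciSup hbd n)
      · apply csSup_le (Set.range_nonempty _)
        rintro x ⟨n, rfl⟩
        exact le_trans (hstep n).2.2.2.2.2.le (le_csSup hbc ⟨n + 1, rfl⟩)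
    have hσC : iSup ds ∈ C := by
      rw [← hσeq]
      refine hC3 _ (by rintro x ⟨n, rfl⟩; exact (hstep n).1) (Set.range_nonempty _) ?_
      rw [hσeq]; exact hσL
    have hσD : iSup ds ∈ D :=
      hD3 (Set.range ds) (by rintro x ⟨n, rfl⟩; exact (hstep n).2.2.1)
        (Set.range_nonempty _) hσL
    refine ⟨iSup ds, ⟨hσC, hσD⟩, ?_⟩
    calc α < cs 0 := (hnC α hα).2.1
      _ ≤ ds 0 := (hstep 0).2.2.2.2.1.le
      _ ≤ iSup ds := le_ciSup hbd 0
  · intro s hs hne hsup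
    exact ⟨hC3 s (fun x hx => (hs hx).1) hne hsup, hD3 s (fun x hx => (hs hx).2) hne hsup⟩

lemma sil_club_tail {L : Ordinal.{u}} (hL : IsSuccLimit L) {a : Ordinal} (ha : a < L) :
    IsClubIn L {i | a < i ∧ i < L} := by
  refine ⟨fun x hx => hx.2, fun α hα => ?_, fun s hs hne hsup => ?_⟩
  · exact ⟨max α a + 1, ⟨(le_max_right α a).trans_lt (lt_add_one _),
      hL.succ_lt (max_lt hα ha)⟩, (le_max_left α a).trans_lt (lt_add_one _)⟩
  · obtain ⟨x, hx⟩ := id hne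
    exact ⟨(hs hx).1.trans_le (le_csSup (sil_bdd (fun y hy => (hs hy).2)) hx), hsup⟩

lemma sil_club_limits {L : Ordinal.{u}} (homega : ∀ α < L, α + ω < L) :
    IsClubIn L {i | i < L ∧ IsSuccLimit i} := by
  refine ⟨fun x hx => hx.1, fun α hα => ?_, ?_⟩
  · refine ⟨α + ω, ⟨homega α hα, isSuccLimit_add α isSuccLimit_omega0⟩, ?_⟩
    calc α < α + 1 := lt_add_one α
      _ ≤ α + ω := add_le_add_right (Order.one_le_iff_pos.2 omega0_pos) α
  · intro s hs hne hsup
    refine ⟨hsup, ?_⟩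
    by_cases hmem : sSup s ∈ s
    · exact (hs hmem).2
    · obtain ⟨x, hx⟩ := id hne
      rw [Ordinal.isSuccLimit_iff, isSuccPrelimit_iff_succ_lt]
      constructor
      · intro h0
        have hle : x ≤ sSup s := le_csSup (sil_bdd (fun y hy => (hs hy).1)) hx
        rw [h0] at hle
        exact (hs hx).2.pos.ne' (nonpos_iff_eq_zero.1 hle)
      · intro β hβ
        obtain ⟨y, hy, hβy⟩ := sil_exists_gt hne hβ
        have hyS : y ≤ sSup s := le_csSup (sil_bdd (fun z hz => (hs hz).1)) hy
        exact lt_of_lt_of_le ((hs hy).2.succ_lt hβy) hyS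

lemma sil_club_closure {L : Ordinal.{u}} (hcof : ℵ₀ < L.cof) (hreg : ∀ i < L, i.card < L.cof)
    (β : Ordinal → Ordinal) (hβ : ∀ j < L, β j < L) :
    IsClubIn L {i | i < L ∧ ∀ j < i, β j < i} := by
  have hLlim : IsSuccLimit L := Ordinal.aleph0_le_cof.1 hcof.le
  refine ⟨fun x hx => hx.1, fun α hα => ?_, fun s hs hne hsup => ?_⟩
  · -- iterate
    have hsucc : ∀ x < L, (Ordinal.bsup.{u,u} x fun j _ => β j + 1) ⊔ (x + 1) < L := by
      intro x hx
      apply max_lt _ (hLlim.succ_lt hx)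
      exact Ordinal.bsup_lt_ord (hreg x hx) (fun j hj => hLlim.succ_lt (hβ j (hj.trans hx)))
    set a : ℕ → Ordinal := fun n =>
      (fun x => (Ordinal.bsup.{u,u} x fun j _ => β j + 1) ⊔ (x + 1))^[n] (α + 1) with ha
    have haL : ∀ n, a n < L := by
      intro n
      induction n with
      | zero => exact hLlim.succ_lt hα
      | succ n ih =>
        have hsn : a (n + 1) = (Ordinal.bsup.{u,u} (a n) fun j _ => β j + 1) ⊔ (a n + 1) :=
          Function.iterate_succ_apply' _ n _
        rw [hsn]; exact hsucc _ ih
    have hbd : BddAbove (Set.range a) := sil_bdd (by rintro x ⟨n, rfl⟩; exact haL n)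
    have hσL : iSup a < L := sil_nat_sup hcof a haL
    refine ⟨iSup a, ⟨hσL, ?_⟩, lt_of_lt_of_le (lt_add_one α) (le_ciSup hbd 0)⟩
    intro j hj
    obtain ⟨n, hn⟩ := (lt_ciSup_iff hbd).1 hj
    have hsn : a (n + 1) = (Ordinal.bsup.{u,u} (a n) fun j _ => β j + 1) ⊔ (a n + 1) :=
      Function.iterate_succ_apply' _ n _
    have : β j + 1 ≤ a (n + 1) := by
      rw [hsn]
      exact le_sup_of_le_left (Ordinal.le_bsup _ j hn)
    exact lt_of_lt_of_le (lt_of_lt_of_le (lt_add_one _) this) (le_ciSup hbd (n + 1))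
  · refine ⟨hsup, fun j hj => ?_⟩
    obtain ⟨y, hy, hjy⟩ := sil_exists_gt hne hj
    exact lt_of_lt_of_le ((hs hy).2 j hjy) (le_csSup (sil_bdd (fun z hz => (hs hz).1)) hy)

/-- the "closure" of the cofinal sequence `g`: a monotone continuous function. -/
noncomputable def silE (g : Ordinal.{u} → Ordinal.{u}) (i : Ordinal.{u}) : Ordinal.{u} :=
  Ordinal.bsup.{u,u} i fun j _ => g j + 1

lemma silE_mono (g : Ordinal.{u} → Ordinal.{u}) {i i' : Ordinal} (h : i ≤ i') :
    silE g i ≤ silE g i' :=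
  Ordinal.bsup_le fun j hj => Ordinal.le_bsup _ j (hj.trans_le h)

lemma silE_ge (g : Ordinal.{u} → Ordinal.{u}) {j i : Ordinal} (h : j < i) :
    g j + 1 ≤ silE g i :=
  Ordinal.le_bsup _ j h

lemma silE_lt {g : Ordinal.{u} → Ordinal.{u}} {x i : Ordinal} :
    x < silE g i ↔ ∃ j, ∃ _ : j < i, x < g j + 1 :=
  Ordinal.lt_bsup _

lemma silE_lt_ord {g : Ordinal.{u} → Ordinal.{u}} {L Ω : Ordinal}
    (hreg : ∀ i < L, i.card < Ω.cof) (hΩ : IsSuccLimit Ω)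
    (hg : ∀ j < L, g j < Ω) {i : Ordinal} (hi : i < L) : silE g i < Ω :=
  Ordinal.bsup_lt_ord (hreg i hi) fun j hj => hΩ.succ_lt (hg j (hj.trans hi))

lemma sil_club_image {L Ω : Ordinal.{u}} (g : Ordinal → Ordinal)
    (hΩ : IsSuccLimit Ω) (hLΩ : L < Ω)
    (hg : ∀ j < L, g j < Ω)
    (hcf : ∀ α < Ω, ∃ j < L, α ≤ g j)
    (hreg : ∀ i < L, i.card < Ω.cof)
    {D : Set Ordinal} (hD : IsClubIn L D) : IsClubIn Ω (silE g '' D) := by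
  obtain ⟨hD1, hD2, hD3⟩ := hD
  have heΩ : ∀ i ∈ D, silE g i < Ω := fun i hi => silE_lt_ord hreg hΩ hg (hD1 hi)
  refine ⟨?_, ?_, ?_⟩
  · rintro x ⟨i, hi, rfl⟩
    exact heΩ i hi
  · intro α hα
    obtain ⟨j, hj, hle⟩ := hcf α hα
    obtain ⟨i, hiD, hji⟩ := hD2 j hj
    exact ⟨silE g i, ⟨i, hiD, rfl⟩,
      lt_of_le_of_lt hle (lt_of_lt_of_le (lt_add_one _) (silE_ge g hji))⟩
  · intro s hs hne hsup
    set u : Set Ordinal := {i ∈ D | silE g i ∈ s} with hu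
    have hsu : s = silE g '' u := by
      apply Set.Subset.antisymm
      · intro x hx
        obtain ⟨i, hiD, rfl⟩ := hs hx
        exact ⟨i, ⟨hiD, hx⟩, rfl⟩
      · rintro x ⟨i, ⟨_, his⟩, rfl⟩
        exact his
    have huD : u ⊆ D := fun i hi => hi.1
    have huL : u ⊆ Set.Iio L := fun i hi => hD1 (huD hi)
    have hune : u.Nonempty := by
      obtain ⟨x, hx⟩ := hne
      obtain ⟨i, hiu, _⟩ := hsu ▸ hx
      exact ⟨i, hiu⟩
    have hbdu : BddAbove u := sil_bdd huL
    have hbds : BddAbove s := sil_bdd (by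
      intro x hx
      obtain ⟨i, hiu, rfl⟩ := hsu ▸ hx
      exact heΩ i (huD hiu))
    have hδL : sSup u < L := by
      by_contra hc
      push_neg at hc
      have hΩle : ∀ α < Ω, α < sSup s := by
        intro α hα
        obtain ⟨j, hj, hle⟩ := hcf α hα
        obtain ⟨i, hiu, hji⟩ := sil_exists_gt hune (lt_of_lt_of_le hj hc)
        have : α < silE g i := lt_of_le_of_lt hle (lt_of_lt_of_le (lt_add_one _) (silE_ge g hji))
        exact lt_of_lt_of_le this (le_csSup hbds (hsu ▸ ⟨i, hiu, rfl⟩))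
      exact absurd (hΩle _ hsup) (lt_irrefl _)
    have hδD : sSup u ∈ D := hD3 u huD hune hδL
    have heq : sSup s = silE g (sSup u) := by
      apply le_antisymm
      · apply csSup_le hne
        intro x hx
        obtain ⟨i, hiu, rfl⟩ := hsu ▸ hx
        exact silE_mono g (le_csSup hbdu hiu)
      · apply Ordinal.bsup_le
        intro j hj
        obtain ⟨i, hiu, hji⟩ := sil_exists_gt hune hj
        exact le_trans (silE_ge g hji) (le_csSup hbds (hsu ▸ ⟨i, hiu, rfl⟩))
    exact ⟨sSup u, hδD, heq.symm⟩

/-- A type with a total relation all of whose "sections" have size at most `c`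
has cardinality at most `succ c`. -/
lemma sil_order_bound {P : Type u} (r : P → P → Prop) (htot : ∀ a b, r a b ∨ r b a)
    (c : Cardinal.{u}) (hc : ℵ₀ ≤ c) (hsec : ∀ b : P, #{a : P // r a b} ≤ c) :
    Cardinal.mk P ≤ Order.succ c := by
  classical
  by_contra hlt
  push_neg at hlt
  have hrefl : ∀ a : P, r a a := fun a => (htot a a).elim id id
  have claim : ∀ {ι : Type u} (F : ι → P), #ι ≤ Order.succ c → ∃ p : P, ∀ y, ¬ r p (F y) := by
    intro ι F hι
    have h1 : #(⋃ y : ι, {p : P | r p (F y)}) ≤ Order.succ c := by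
      refine le_trans (Cardinal.mk_iUnion_le _) ?_
      have h2 : ⨆ y, #{p : P | r p (F y)} ≤ c := by
        rcases isEmpty_or_nonempty ι with h | h
        · rw [ciSup_of_empty]; exact bot_le
        · exact ciSup_le' fun y => hsec (F y)
      calc #ι * ⨆ y, #{p : P | r p (F y)} ≤ Order.succ c * c := mul_le_mul' hι h2
        _ = Order.succ c := Cardinal.mul_eq_left (hc.trans (le_succ c)) (le_succ c)
            (lt_of_lt_of_le aleph0_pos hc).ne'
    have h2 : (⋃ y : ι, {p : P | r p (F y)}) ≠ Set.univ := by
      intro h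
      rw [h] at h1
      rw [Cardinal.mk_univ] at h1
      exact absurd (lt_of_lt_of_le hlt h1) (lt_irrefl _)
    obtain ⟨p, hp⟩ := (Set.ne_univ_iff_exists_notMem _).1 h2
    exact ⟨p, fun y hy => hp (Set.mem_iUnion.2 ⟨y, hy⟩)⟩
  set W := ((Order.succ c).ord).ToType with hW
  have hWcard : #W = Order.succ c := by rw [hW, Cardinal.mk_toType, Cardinal.card_ord]
  let step : ∀ x : W, (∀ y : W, y < x → P) → P := fun x ih =>
    (claim (ι := {y : W // y < x}) (fun y => ih y.1 y.2)
      ((Cardinal.mk_subtype_le _).trans hWcard.le)).choose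
  let G : W → P := fun x =>
    (IsWellFounded.wf (α := W) (r := (· < ·))).fix step x
  have hfix : ∀ x : W, G x = step x (fun y _ => G y) := fun x =>
    WellFounded.fix_eq _ step x
  have hG : ∀ x y : W, y < x → ¬ r (G x) (G y) := by
    intro x y hy
    rw [hfix x]
    exact (claim (ι := {y : W // y < x}) (fun z => G z.1)
      ((Cardinal.mk_subtype_le _).trans hWcard.le)).choose_spec ⟨y, hy⟩
  have hGinj : Function.Injective G := by
    intro x y hxy
    by_contra hne
    rcases Ne.lt_or_gt hne with h | h
    · exact hG y x h (hxy ▸ hrefl (G x))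
    · exact hG x y h (hxy ▸ hrefl (G y))
  obtain ⟨p, hp⟩ := claim G hWcard.le
  have hsub : Set.range G ⊆ {a : P | r a p} := by
    rintro a ⟨y, rfl⟩
    exact (htot (G y) p).resolve_right (hp y)
  have h3 : Order.succ c ≤ #{a : P // r a p} := by
    calc Order.succ c = #W := hWcard.symm
      _ = #(Set.range G) := (Cardinal.mk_range_eq G hGinj).symm
      _ ≤ #{a : P | r a p} := Cardinal.mk_le_mk_of_subset hsub
  exact absurd (h3.trans (hsec p)) (not_le.2 (lt_succ c))

open Classical in
noncomputable def silCF (e : Ordinal.{u} → Ordinal.{u}) (T : Set Ordinal)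
    (hw : ∀ i ∈ T, Nonempty (Set (↥(Set.Iio (e i))) ↪ ↥(Set.Iio ((Order.succ (e i).card).ord))))
    (i : Ordinal) (A : Set Ordinal) : Ordinal :=
  if h : i ∈ T then ((Classical.choice (hw i h)) {x : ↥(Set.Iio (e i)) | ↑x ∈ A}).1 else 0

lemma silCF_lt {e : Ordinal.{u} → Ordinal.{u}} {T : Set Ordinal}
    {hw : ∀ i ∈ T, Nonempty (Set (↥(Set.Iio (e i))) ↪ ↥(Set.Iio ((Order.succ (e i).card).ord)))}
    {i : Ordinal} (h : i ∈ T) (A : Set Ordinal) :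
    silCF e T hw i A < (Order.succ (e i).card).ord := by
  rw [silCF, dif_pos h];   exact ((Classical.choice (hw i h)) _).2

lemma silCF_inj {e : Ordinal.{u} → Ordinal.{u}} {T : Set Ordinal}
    {hw : ∀ i ∈ T, Nonempty (Set (↥(Set.Iio (e i))) ↪ ↥(Set.Iio ((Order.succ (e i).card).ord)))}
    {i : Ordinal} (h : i ∈ T) {A B : Set Ordinal}
    (hA : A ⊆ Set.Iio (e i)) (hB : B ⊆ Set.Iio (e i))
    (heq : silCF e T hw i A = silCF e T hw i B) : A = B := by
  rw [silCF, dif_pos h, silCF, dif_pos h] at heq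
  have h2 := (Classical.choice (hw i h)).injective (Subtype.ext heq)
  ext x
  constructor
  · intro hx
    have h3 : (⟨x, hA hx⟩ : ↥(Set.Iio (e i))) ∈ {x : ↥(Set.Iio (e i)) | ↑x ∈ A} := hx
    rw [h2] at h3
    exact h3
  · intro hx
    have h3 : (⟨x, hB hx⟩ : ↥(Set.Iio (e i))) ∈ {x : ↥(Set.Iio (e i)) | ↑x ∈ B} := hx
    rw [← h2] at h3
    exact h3

open Classical in
noncomputable def silD (e φ : Ordinal.{u} → Ordinal.{u}) (T : Set Ordinal)
    (hd : ∀ i ∈ T, Nonempty (↥(Set.Iio (φ i + 1)) ↪ ↥(Set.Iio (e i))))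
    (i x : Ordinal) : Ordinal :=
  if h : i ∈ T ∧ x < φ i + 1 then ((Classical.choice (hd i h.1)) ⟨x, h.2⟩).1 else 0

lemma silD_lt {e φ : Ordinal.{u} → Ordinal.{u}} {T : Set Ordinal}
    {hd : ∀ i ∈ T, Nonempty (↥(Set.Iio (φ i + 1)) ↪ ↥(Set.Iio (e i)))}
    {i x : Ordinal} (h : i ∈ T) (hx : x < φ i + 1) : silD e φ T hd i x < e i := by
  rw [silD, dif_pos ⟨h, hx⟩]
  exact ((Classical.choice (hd i h)) _).2

lemma silD_inj {e φ : Ordinal.{u} → Ordinal.{u}} {T : Set Ordinal}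
    {hd : ∀ i ∈ T, Nonempty (↥(Set.Iio (φ i + 1)) ↪ ↥(Set.Iio (e i)))}
    {i x x' : Ordinal} (h : i ∈ T) (hx : x < φ i + 1) (hx' : x' < φ i + 1)
    (heq : silD e φ T hd i x = silD e φ T hd i x') : x = x' := by
  rw [silD, dif_pos ⟨h, hx⟩, silD, dif_pos ⟨h, hx'⟩] at heq
  have h2 := (Classical.choice (hd i h)).injective (Subtype.ext heq)
  exact congrArg Subtype.val h2

lemma sil_main (κ : Cardinal.{u}) (hinf : Cardinal.aleph0 ≤ κ)
    (hsing : κ.ord.cof < κ) (hunc : Cardinal.aleph0 < κ.ord.cof)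
    (hstat : IsStationaryIn κ.ord
      {α : Ordinal | 2 ^ α.card = Order.succ α.card}) :
    2 ^ κ = Order.succ κ := by
  classical
  set Ω := κ.ord with hΩdef
  set lam := Ω.cof with hlamdef
  set L := lam.ord with hLdef
  have hΩlim : IsSuccLimit Ω := Cardinal.isSuccLimit_ord hinf
  have hreg : lam.IsRegular := Cardinal.isRegular_cof hΩlim
  have haleph_lam : ℵ₀ ≤ lam := hreg.1
  have hcofL : L.cof = lam := hreg.cof_eq
  have hcardL : L.card = lam := Cardinal.card_ord lam
  have hℵL : ℵ₀ < L.cof := by rw [hcofL]; exact hunc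
  have hLlim : IsSuccLimit L := Cardinal.isSuccLimit_ord haleph_lam
  have hLΩ : L < Ω := Cardinal.ord_lt_ord.2 hsing
  have hℵκ : ℵ₀ < κ := lt_of_lt_of_le hunc (Ordinal.cof_ord_le κ)
  have hregL : ∀ i < L, i.card < L.cof := fun i hi => by
    rw [hcofL]; exact Cardinal.lt_ord.1 hi
  have hregΩL : ∀ i < L, i.card < Ω.cof := fun i hi => Cardinal.lt_ord.1 hi
  have homega : ∀ α < L, α + ω < L := by
    intro α hα
    rw [Cardinal.lt_ord, Ordinal.card_add, Ordinal.card_omega0]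
    exact Cardinal.add_lt_of_lt haleph_lam (Cardinal.lt_ord.1 hα) hunc
  have hsucclt : ∀ c : Cardinal, c < κ → Order.succ c < κ := by
    intro c hc
    rcases lt_or_ge c ℵ₀ with h | h
    · exact lt_of_le_of_lt (Order.succ_le_of_lt h) hℵκ
    · by_contra hcon
      push_neg at hcon
      have hκc : κ = Order.succ c := le_antisymm hcon (Order.succ_le_of_lt hc)
      have hregκ : κ.IsRegular := hκc ▸ Cardinal.isRegular_succ h
      have h2 : lam = κ := hregκ.cof_eq
      rw [h2] at hsing
      exact lt_irrefl _ hsing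
  obtain ⟨f, hf⟩ := Ordinal.exists_fundamental_sequence Ω
  set g : Ordinal → Ordinal := fun j => if h : j < L then f j h else 0 with hgdef
  have hg1 : ∀ j < L, g j < Ω := by
    intro j hj
    rw [hgdef]
    simp only [dif_pos hj]
    exact hf.lt hj
  have hgmono : ∀ {j j' : Ordinal}, j < L → j' < L → j < j' → g j < g j' := by
    intro j j' hj hj' hjj
    rw [hgdef]
    simp only [dif_pos hj, dif_pos hj']
    exact hf.2.1 hj hj' hjj
  have hgcf : ∀ α < Ω, ∃ j < L, α ≤ g j := by
    intro α hα
    rw [← hf.2.2] at hα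
    obtain ⟨j, hj, hle⟩ := Ordinal.lt_blsub_iff.1 hα
    refine ⟨j, hj, ?_⟩
    rw [hgdef]
    simp only [dif_pos hj]
    exact le_of_le_of_eq hle (dif_pos hj).symm
  set S0 : Set Ordinal := {α : Ordinal | 2 ^ α.card = Order.succ α.card} with hS0
  have heΩ : ∀ i < L, silE g i < Ω := fun i hi => silE_lt_ord hregΩL hΩlim hg1 hi
  have hgele : ∀ {j : Ordinal}, j < L → silE g j ≤ g j := by
    intro j hj
    apply Ordinal.bsup_le
    intro j' hj'
    have h1 : g j' < g j := hgmono (hj'.trans hj) hj hj'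
    rw [Ordinal.add_one_eq_succ]
    exact Order.succ_le_of_lt h1
  obtain ⟨i1, hi1L, hi1⟩ := hgcf L hLΩ
  set T : Set Ordinal := {i | i < L ∧ IsSuccLimit i ∧ i1 < i ∧ silE g i ∈ S0} with hT
  have hTsub : T ⊆ Set.Iio L := fun i hi => hi.1
  have hTL : ∀ i ∈ T, L < silE g i := fun i hi =>
    lt_of_le_of_lt hi1 (lt_of_lt_of_le (lt_add_one _) (silE_ge g hi.2.2.1))
  have hTgch : ∀ i ∈ T, 2 ^ (silE g i).card = Order.succ (silE g i).card := fun i hi => hi.2.2.2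
  have hTcard : ∀ i ∈ T, lam ≤ (silE g i).card := by
    intro i hi
    have h1 := Ordinal.card_le_card (hTL i hi).le
    rwa [hcardL] at h1
  have hTcardκ : ∀ i ∈ T, (silE g i).card < κ := fun i hi => Cardinal.lt_ord.1 (heΩ i hi.1)
  have hTinf : ∀ i ∈ T, ℵ₀ ≤ (silE g i).card := fun i hi => haleph_lam.trans (hTcard i hi)
  have hTstat : IsStationaryIn L T := by
    refine ⟨hTsub, ?_⟩
    intro D hD
    have hD1 : IsClubIn L ({i | i < L ∧ IsSuccLimit i} ∩ {i | i1 < i ∧ i < L}) :=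
      sil_club_inter hℵL (sil_club_limits homega) (sil_club_tail hLlim hi1L)
    have hD2 : IsClubIn L (D ∩ ({i | i < L ∧ IsSuccLimit i} ∩ {i | i1 < i ∧ i < L})) :=
      sil_club_inter hℵL hD hD1
    have himg : IsClubIn Ω (silE g '' (D ∩ ({i | i < L ∧ IsSuccLimit i} ∩ {i | i1 < i ∧ i < L}))) :=
      sil_club_image g hΩlim hLΩ hg1 (fun α hα => hgcf α hα) hregΩL hD2
    obtain ⟨α, hαS, hαC⟩ := hstat.2 _ himg
    obtain ⟨i, hiD, rfl⟩ := hαC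
    exact ⟨i, ⟨hiD.2.1.1, hiD.2.1.2, hiD.2.2.1, hαS⟩, hiD.1⟩
  have hTunb : ∀ α < L, ∃ i ∈ T, α < i := by
    intro α hα
    obtain ⟨i, hiT, hiD⟩ := hTstat.2 _ (sil_club_tail hLlim hα)
    exact ⟨i, hiT, hiD.1⟩
  have hw : ∀ i ∈ T, Nonempty (Set (↥(Set.Iio (silE g i))) ↪
      ↥(Set.Iio ((Order.succ (silE g i).card).ord))) := by
    intro i hi
    rw [← Cardinal.le_def, Cardinal.mk_set, Ordinal.mk_Iio_ordinal, Ordinal.mk_Iio_ordinal,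
      Cardinal.card_ord]
    have h1 : (2 : Cardinal.{u+1}) ^ Cardinal.lift.{u+1} (silE g i).card
        = Cardinal.lift.{u+1} (2 ^ (silE g i).card) := by
      rw [Cardinal.lift_power, Cardinal.lift_two]
    rw [h1, hTgch i hi]
  set cF := silCF (silE g) T hw with hcF
  set fA : Set Ordinal → Ordinal → Ordinal := fun A i => cF i (A ∩ Set.Iio (silE g i)) with hfA
  have hfA_lt : ∀ (A : Set Ordinal), ∀ i ∈ T, fA A i < (Order.succ (silE g i).card).ord :=
    fun A i hi => silCF_lt hi _
  have hfkey : ∀ A B : Set Ordinal, A ⊆ Set.Iio Ω → B ⊆ Set.Iio Ω →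
      (∀ α < L, ∃ i ∈ T, α < i ∧ fA A i = fA B i) → A = B := by
    intro A B hA hB hU
    have key : ∀ x : Ordinal, x < Ω → (x ∈ A ↔ x ∈ B) := by
      intro x hx
      obtain ⟨b, hbL, hxb⟩ := hgcf x hx
      obtain ⟨i, hiT, hbi, heqi⟩ := hU b hbL
      have hxe : x < silE g i := lt_of_le_of_lt hxb (lt_of_lt_of_le (lt_add_one _) (silE_ge g hbi))
      simp only [hfA, hcF] at heqi
      have hsets := silCF_inj (hw := hw) hiT Set.inter_subset_right Set.inter_subset_right heqi
      constructor
      · intro hxA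
        have h2 : x ∈ B ∩ Set.Iio (silE g i) := hsets ▸ (⟨hxA, hxe⟩ : x ∈ A ∩ Set.Iio (silE g i))
        exact h2.1
      · intro hxB
        have h2 : x ∈ A ∩ Set.Iio (silE g i) :=
          hsets.symm ▸ (⟨hxB, hxe⟩ : x ∈ B ∩ Set.Iio (silE g i))
        exact h2.1
    ext x
    constructor
    · intro hx; exact (key x (hA hx)).1 hx
    · intro hx; exact (key x (hB hx)).2 hx
  set P := {A : Set Ordinal // A ⊆ Set.Iio Ω} with hP
  set r : P → P → Prop := fun A B => IsStationaryIn L {i | i ∈ T ∧ fA A.1 i ≤ fA B.1 i} with hr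
  have htot : ∀ A B : P, r A B ∨ r B A := by
    intro A B
    by_contra hcon
    push_neg at hcon
    obtain ⟨hAB, hBA⟩ := hcon
    simp only [hr] at hAB hBA
    have h1 : ∃ C, IsClubIn L C ∧ ¬ (({i | i ∈ T ∧ fA A.1 i ≤ fA B.1 i}) ∩ C).Nonempty := by
      by_contra hno
      push_neg at hno
      exact hAB ⟨fun i hi => hi.1.1, hno⟩
    have h2 : ∃ C, IsClubIn L C ∧ ¬ (({i | i ∈ T ∧ fA B.1 i ≤ fA A.1 i}) ∩ C).Nonempty := by
      by_contra hno
      push_neg at hno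
      exact hBA ⟨fun i hi => hi.1.1, hno⟩
    obtain ⟨C1, hC1, hC1e⟩ := h1
    obtain ⟨C2, hC2, hC2e⟩ := h2
    have hC12 := sil_club_inter hℵL hC1 hC2
    obtain ⟨i, hiT, hiC⟩ := hTstat.2 _ hC12
    rcases le_total (fA A.1 i) (fA B.1 i) with h | h
    · exact hC1e ⟨i, ⟨hiT, h⟩, hiC.1⟩
    · exact hC2e ⟨i, ⟨hiT, h⟩, hiC.2⟩
  have hsec : ∀ B : P, #{A : P // r A B} ≤ Cardinal.lift.{u+1} κ := by
    intro B
    have hd : ∀ i ∈ T, Nonempty (↥(Set.Iio (fA B.1 i + 1)) ↪ ↥(Set.Iio (silE g i))) := by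
      intro i hi
      rw [← Cardinal.le_def, Ordinal.mk_Iio_ordinal, Ordinal.mk_Iio_ordinal, Cardinal.lift_le]
      have h1 : (fA B.1 i).card ≤ (silE g i).card := by
        have h2 := hfA_lt B.1 i hi
        rw [Cardinal.lt_ord] at h2
        exact Order.lt_succ_iff.1 h2
      calc (fA B.1 i + 1).card = (fA B.1 i).card + 1 := by
            rw [Ordinal.add_one_eq_succ, Ordinal.card_succ]
        _ ≤ (silE g i).card + 1 := add_le_add_left h1 1
        _ = (silE g i).card := Cardinal.add_one_of_aleph0_le (hTinf i hi)
    set d := silD (silE g) (fA B.1) T hd with hd2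
    have hpress : ∀ A : P, r A B → ∃ j, ∃ _ : j < L, ∀ α < L,
        ∃ i, (i ∈ T ∧ fA A.1 i ≤ fA B.1 i) ∧ α < i ∧ d i (fA A.1 i) < silE g j := by
      intro A hrA
      by_contra hcon
      push_neg at hcon
      choose β hβL hβ using hcon
      set β' : Ordinal → Ordinal := fun j => if h : j < L then β j h else 0 with hβ'def
      have hβ'L : ∀ j < L, β' j < L := by
        intro j hj
        rw [hβ'def]
        simp only [dif_pos hj]
        exact hβL j hj
      obtain ⟨i, hiS, hiC⟩ := hrA.2 _ (sil_club_closure hℵL hregL β' hβ'L)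
      have hiT : i ∈ T := hiS.1
      have hfalt : fA A.1 i < fA B.1 i + 1 := by
        rw [Ordinal.add_one_eq_succ]
        exact Order.lt_succ_iff.2 hiS.2
      have hdlt : d i (fA A.1 i) < silE g i := by
        simp only [hd2]
        exact silD_lt hiT hfalt
      obtain ⟨j, hji, hj⟩ := silE_lt.1 hdlt
      have hjsucc : j + 1 < i := by
        rw [Ordinal.add_one_eq_succ]
        exact hiT.2.1.succ_lt hji
      have hdj : d i (fA A.1 i) < silE g (j + 1) :=
        lt_of_lt_of_le hj (silE_ge g (lt_add_one j))
      have hj1L : j + 1 < L := hjsucc.trans hiT.1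
      have hβlt : β (j + 1) hj1L < i := by
        have h5 := hiC.2 (j + 1) hjsucc
        rw [hβ'def] at h5
        simpa only [dif_pos hj1L] using h5
      exact absurd hdj (not_lt.2 (hβ (j + 1) hj1L i ⟨hiT, hiS.2⟩ hβlt))
    set Q := {A : P // r A B} with hQ
    choose jA hjAL hjA using fun A : Q => hpress A.1 A.2
    have hLpos : (0 : Ordinal) < L := hLlim.pos
    have hIne : Nonempty (↥(Set.Iio L)) := ⟨⟨0, hLpos⟩⟩
    have hcover : (Set.univ : Set Q) = ⋃ j : ↥(Set.Iio L), {A : Q | jA A = ↑j} := by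
      apply Set.eq_of_subset_of_subset
      · intro A _
        exact Set.mem_iUnion.2 ⟨⟨jA A, hjAL A⟩, rfl⟩
      · intro A _
        trivial
    have hfiber : ∀ j : ↥(Set.Iio L), #↥{A : Q | jA A = ↑j} ≤ Cardinal.lift.{u+1} κ := by
      intro j
      have hF : ∃ F : ↥{A : Q | jA A = ↑j} → (↥(Set.Iio L) → ↥(Set.Iio (silE g ↑j + 1))),
          Function.Injective F := by
        refine ⟨fun A i => if h : (↑i ∈ T ∧ fA A.1.1.1 ↑i ≤ fA B.1 ↑i) ∧
            d ↑i (fA A.1.1.1 ↑i) < silE g ↑j then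
            ⟨d ↑i (fA A.1.1.1 ↑i) + 1, by
              rw [Ordinal.add_one_eq_succ, Ordinal.add_one_eq_succ]
              exact Order.succ_lt_succ h.2⟩
          else ⟨0, lt_of_le_of_lt zero_le (lt_add_one (silE g ↑j))⟩, ?_⟩
        intro A A' hAA
        apply Subtype.ext
        apply Subtype.ext
        apply Subtype.ext
        apply hfkey A.1.1.1 A'.1.1.1 A.1.1.2 A'.1.1.2
        intro α hα
        obtain ⟨i, hcond, hαi, hdlt⟩ := hjA A.1 α hα
        rw [A.2] at hdlt
        have hiL : i < L := hcond.1.1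
        have h6 := congrFun hAA ⟨i, hiL⟩
        simp only [Subtype.coe_mk] at h6
        rw [dif_pos ⟨hcond, hdlt⟩] at h6
        by_cases h7 : (i ∈ T ∧ fA A'.1.1.1 i ≤ fA B.1 i) ∧ d i (fA A'.1.1.1 i) < silE g ↑j
        · rw [dif_pos h7] at h6
          have h8 : d i (fA A.1.1.1 i) + 1 = d i (fA A'.1.1.1 i) + 1 :=
            congrArg Subtype.val h6
          have h9 : d i (fA A.1.1.1 i) = d i (fA A'.1.1.1 i) := by
            rw [Ordinal.add_one_eq_succ, Ordinal.add_one_eq_succ] at h8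
            exact Order.succ_injective h8
          have hx : fA A.1.1.1 i < fA B.1 i + 1 := by
            rw [Ordinal.add_one_eq_succ]
            exact Order.lt_succ_iff.2 hcond.2
          have hx' : fA A'.1.1.1 i < fA B.1 i + 1 := by
            rw [Ordinal.add_one_eq_succ]
            exact Order.lt_succ_iff.2 h7.1.2
          simp only [hd2] at h9
          have h10 : fA A.1.1.1 i = fA A'.1.1.1 i := silD_inj hcond.1 hx hx' h9
          exact ⟨i, hcond.1, hαi, h10⟩
        · rw [dif_neg h7] at h6
          have h8 : d i (fA A.1.1.1 i) + 1 = 0 := congrArg Subtype.val h6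
          rw [Ordinal.add_one_eq_succ] at h8
          exact absurd h8 (Order.succ_ne_bot _)
      obtain ⟨F, hF⟩ := hF
      calc #↥{A : Q | jA A = ↑j} ≤ #(↥(Set.Iio L) → ↥(Set.Iio (silE g ↑j + 1))) :=
            Cardinal.mk_le_of_injective hF
        _ = #↥(Set.Iio (silE g ↑j + 1)) ^ #↥(Set.Iio L) := (Cardinal.power_def _ _).symm
        _ = Cardinal.lift.{u+1} (silE g ↑j + 1).card ^ Cardinal.lift.{u+1} lam := by
            rw [Ordinal.mk_Iio_ordinal, Ordinal.mk_Iio_ordinal, hcardL]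
        _ = Cardinal.lift.{u+1} ((silE g ↑j + 1).card ^ lam) := (Cardinal.lift_power _ _).symm
        _ ≤ Cardinal.lift.{u+1} κ := by
            rw [Cardinal.lift_le]
            obtain ⟨m, hmT, hjm⟩ := hTunb ↑j j.2
            have h1 : (silE g ↑j + 1).card ≤ (silE g m).card := by
              apply Ordinal.card_le_card
              calc silE g ↑j + 1 ≤ g ↑j + 1 := add_le_add_left (hgele j.2) 1
                _ ≤ silE g m := silE_ge g hjm
            have hminf : ℵ₀ ≤ (silE g m).card := hTinf m hmT
            calc (silE g ↑j + 1).card ^ lam ≤ (silE g m).card ^ lam :=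
                  Cardinal.power_le_power_right h1
              _ ≤ (silE g m).card ^ (silE g m).card :=
                  Cardinal.power_le_power_left (aleph0_pos.trans_le hminf).ne' (hTcard m hmT)
              _ = 2 ^ (silE g m).card := Cardinal.power_self_eq hminf
              _ = Order.succ (silE g m).card := hTgch m hmT
              _ ≤ κ := (hsucclt _ (hTcardκ m hmT)).le
    calc #Q = #↥(Set.univ : Set Q) := Cardinal.mk_univ.symm
      _ = #↥(⋃ j : ↥(Set.Iio L), {A : Q | jA A = ↑j}) := by rw [hcover]
      _ ≤ #↥(Set.Iio L) * ⨆ j : ↥(Set.Iio L), #↥{A : Q | jA A = ↑j} :=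
            Cardinal.mk_iUnion_le _
      _ ≤ Cardinal.lift.{u+1} lam * Cardinal.lift.{u+1} κ := by
            refine mul_le_mul' (le_of_eq ?_) (ciSup_le' hfiber)
            rw [Ordinal.mk_Iio_ordinal, hcardL]
      _ ≤ Cardinal.lift.{u+1} κ := le_of_eq (Cardinal.mul_eq_right
            (Cardinal.aleph0_le_lift.2 hℵκ.le) (Cardinal.lift_le.2 hsing.le)
            (fun h0 => (aleph0_pos.trans_le haleph_lam).ne' (Cardinal.lift_eq_zero.1 h0)))
  have halephlift : ℵ₀ ≤ Cardinal.lift.{u+1} κ := Cardinal.aleph0_le_lift.2 hℵκ.le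
  have hPbound : #P ≤ Order.succ (Cardinal.lift.{u+1} κ) :=
    sil_order_bound r htot _ halephlift hsec
  have hinj2 : #(Set (↥(Set.Iio Ω))) ≤ #P := by
    apply Cardinal.mk_le_of_injective (f := fun s : Set (↥(Set.Iio Ω)) =>
      (⟨Subtype.val '' s, by rintro x ⟨y, _, rfl⟩; exact y.2⟩ : P))
    intro s t hst
    have h1 : Subtype.val '' s = Subtype.val '' t := congrArg Subtype.val hst
    exact Set.image_injective.2 Subtype.val_injective h1
  have hfinal : Cardinal.lift.{u+1} (2 ^ κ) ≤ Cardinal.lift.{u+1} (Order.succ κ) := by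
    calc Cardinal.lift.{u+1} (2 ^ κ) = 2 ^ Cardinal.lift.{u+1} κ := by
          rw [Cardinal.lift_power, Cardinal.lift_two]
      _ = #(Set (↥(Set.Iio Ω))) := by
          rw [Cardinal.mk_set, Ordinal.mk_Iio_ordinal]
          rw [show Ω.card = κ from Cardinal.card_ord κ]
      _ ≤ #P := hinj2
      _ ≤ Order.succ (Cardinal.lift.{u+1} κ) := hPbound
      _ = Cardinal.lift.{u+1} (Order.succ κ) := (Cardinal.lift_succ κ).symm
  exact le_antisymm (Cardinal.lift_le.1 hfinal) (Order.succ_le_of_lt (Cardinal.cantor κ))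

theorem silver (κ : Cardinal) (hinf : Cardinal.aleph0 ≤ κ)
    (hsing : κ.ord.cof < κ) (hunc : Cardinal.aleph0 < κ.ord.cof)
    (hstat : IsStationaryIn κ.ord
      {α : Ordinal | 2 ^ α.card = Order.succ α.card}) :
    2 ^ κ = Order.succ κ :=
  sil_main κ hinf hsing hunc hstat
end

section
/- If κ is a singular strong limit cardinal of uncountable cofinality and 2^κ > κ⁺, then the set {α < κ : 2^α > α⁺} contains a closed unbounded subset of κ. -/
open Ordinal Cardinal Set Order Classical

namespace SilverAux
universe u

noncomputable section

/-- stationary in ν -/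
def IsStatIn (ν : Ordinal) (T : Set Ordinal) : Prop :=
  ∀ C, IsClubIn ν C → (T ∩ C).Nonempty

variable {ν : Ordinal.{u}}

theorem bddAbove_of_lt (s : Set Ordinal) (b : Ordinal) (h : ∀ x ∈ s, x < b) : BddAbove s :=
  ⟨b, fun x hx => (h x hx).le⟩

theorem isSuccLimit_of_ne_zero_succ_lt {o : Ordinal} (h0 : o ≠ 0) (h : ∀ a < o, succ a < o) :
    IsSuccLimit o := by
  rw [isSuccLimit_iff_of_orderBot, Ordinal.bot_eq_zero]
  exact ⟨h0, isSuccPrelimit_of_succ_lt h⟩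

theorem isClubIn_Iio (hν : IsSuccLimit ν) : IsClubIn ν (Set.Iio ν) := by
  refine ⟨le_refl _, fun α hα => ⟨α + 1, hν.succ_lt hα, lt_succ α⟩, fun s hs _ h => h⟩

theorem isClubIn_Ioo (hν : IsSuccLimit ν) {a : Ordinal} (ha : a < ν) :
    IsClubIn ν (Set.Ioo a ν) := by
  refine ⟨fun x hx => hx.2, fun α hα => ?_, fun s hsub hne hlt => ?_⟩
  · exact ⟨max a α + 1, ⟨(le_max_left a α).trans_lt (lt_succ _),
      hν.succ_lt (max_lt ha hα)⟩, (le_max_right a α).trans_lt (lt_succ _)⟩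
  · obtain ⟨x, hx⟩ := hne
    exact ⟨(hsub hx).1.trans_le (le_csSup (bddAbove_of_lt s ν fun y hy => (hsub hy).2) hx), hlt⟩

end

end SilverAux

namespace SilverAux
universe u
noncomputable section
variable {ν : Ordinal.{u}}

theorem mem_of_iSup_seq {C : Set Ordinal} (hC : IsClubIn ν C) (t : ℕ → Ordinal)
    (ht : ∀ n, t n ∈ C) (h : (⨆ n, t n) < ν) : (⨆ n, t n) ∈ C :=
  hC.2.2 (Set.range t) (Set.range_subset_iff.2 ht) ⟨t 0, Set.mem_range_self 0⟩ h

theorem isClubIn_iInter (hν : ℵ₀ < ν.cof) {ι : Type u} (hι : #ι < ν.cof)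
    {C : ι → Set Ordinal} (hC : ∀ i, IsClubIn ν (C i)) :
    IsClubIn ν (Set.Iio ν ∩ ⋂ i, C i) := by
  have hlim : IsSuccLimit ν := Ordinal.aleph0_le_cof.mp hν.le
  refine ⟨Set.inter_subset_left, fun α hα => ?_, fun s hsub hne hlt => ?_⟩
  · cases isEmpty_or_nonempty ι with
    | inl h => exact ⟨α + 1, ⟨hlim.succ_lt hα, Set.mem_iInter.2 fun i => (h.elim i)⟩, lt_succ α⟩
    | inr h =>
      set next : ι → Ordinal → Ordinal :=
        fun i x => if h : x < ν then choose ((hC i).2.1 x h) else 0 with hnext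
      have hnmem : ∀ i x, x < ν → next i x ∈ C i := by
        intro i x hx
        simp only [hnext, dif_pos hx]
        exact (choose_spec ((hC i).2.1 x hx)).1
      have hngt : ∀ i x, x < ν → x < next i x := by
        intro i x hx
        simp only [hnext, dif_pos hx]
        exact (choose_spec ((hC i).2.1 x hx)).2
      have hnlt : ∀ i x, x < ν → next i x < ν := fun i x hx => (hC i).1 (hnmem i x hx)
      set g : Ordinal → Ordinal := fun x => ⨆ i, next i x with hg
      have hbdd : ∀ x, BddAbove (Set.range fun i => next i x) := by
        intro x
        rcases lt_or_ge x ν with hx | hx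
        · exact ⟨ν, fun y ⟨i, hi⟩ => hi ▸ (hnlt i x hx).le⟩
        · refine ⟨0, fun y ⟨i, hi⟩ => ?_⟩
          simp only [hnext, dif_neg (not_lt.2 hx)] at hi
          exact hi ▸ le_refl _
      have hglt : ∀ x, x < ν → g x < ν := fun x hx =>
        Ordinal.iSup_lt_ord hι fun i => hnlt i x hx
      have hggt : ∀ x, x < ν → x < g x := fun x hx =>
        (hngt (Classical.arbitrary ι) x hx).trans_le (le_ciSup (hbdd x) _)
      set t : ℕ → Ordinal := fun n => g^[n] α with hT
      have htsucc : ∀ n, t (n + 1) = g (t n) := fun n => Function.iterate_succ_apply' g n α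
      have htlt : ∀ n, t n < ν := by
        intro n
        induction n with
        | zero => exact hα
        | succ n ih => rw [show t (n+1) = g (t n) from htsucc n]; exact hglt _ ih
      set β : Ordinal := ⨆ n, t n with hβdef
      have hbddt : BddAbove (Set.range t) := ⟨ν, fun y ⟨n, hn⟩ => hn ▸ (htlt n).le⟩
      have hβν : β < ν := Ordinal.iSup_lt_ord_lift (by simpa using hν) htlt
      have hαβ : α < β := by
        have : t 0 < t 1 := by rw [htsucc 0]; exact hggt _ (htlt 0)
        exact this.trans_le (le_ciSup hbddt 1)
      refine ⟨β, ⟨hβν, Set.mem_iInter.2 fun i => ?_⟩, hαβ⟩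
      have hkey : (⨆ n, next i (t n)) = β := by
        apply le_antisymm
        · refine ciSup_le fun n => ?_
          have : next i (t n) ≤ t (n + 1) := by
            rw [htsucc n]; exact le_ciSup (hbdd (t n)) i
          exact this.trans (le_ciSup hbddt (n + 1))
        · refine ciSup_le fun n => ?_
          exact (hngt i (t n) (htlt n)).le.trans
            (le_ciSup ⟨ν, fun y ⟨m, hm⟩ => hm ▸ (hnlt i (t m) (htlt m)).le⟩ n)
      have := mem_of_iSup_seq (hC i) (fun n => next i (t n))
        (fun n => hnmem i (t n) (htlt n)) (by rw [hkey]; exact hβν)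
      rwa [hkey] at this
  · refine ⟨hlt, Set.mem_iInter.2 fun i => ?_⟩
    exact (hC i).2.2 s (fun x hx => Set.mem_iInter.1 (hsub hx).2 i) hne hlt

theorem isClubIn_inter (hν : ℵ₀ < ν.cof) {C₁ C₂ : Set Ordinal}
    (h1 : IsClubIn ν C₁) (h2 : IsClubIn ν C₂) : IsClubIn ν (C₁ ∩ C₂) := by
  have hb : #(ULift.{u} Bool) < ν.cof :=
    lt_trans (Cardinal.lt_aleph0_of_finite _) hν
  have := isClubIn_iInter hν hb (C := fun b : ULift.{u} Bool => bif b.down then C₁ else C₂)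
    (fun b => by rcases b with ⟨b⟩; cases b; exacts [h2, h1])
  have he : (Set.Iio ν ∩ ⋂ b : ULift.{u} Bool, (bif b.down then C₁ else C₂)) = C₁ ∩ C₂ := by
    ext x
    simp only [Set.mem_inter_iff, Set.mem_iInter, ULift.forall, Bool.forall_bool, cond_false,
      cond_true, Set.mem_Iio]
    constructor
    · rintro ⟨_, h₂, h₁⟩; exact ⟨h₁, h₂⟩
    · rintro ⟨h₁, h₂⟩; exact ⟨h1.1 h₁, h₂, h₁⟩
  rwa [he] at this

end
end SilverAux

namespace SilverAux
universe u
noncomputable section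
variable {ν : Ordinal.{u}}

theorem IsStatIn.inter_club (hν : ℵ₀ < ν.cof) {T C : Set Ordinal}
    (hT : IsStatIn ν T) (hC : IsClubIn ν C) : IsStatIn ν (T ∩ C) := by
  intro C' hC'
  obtain ⟨x, hxT, hxC, hxC'⟩ := hT _ (isClubIn_inter hν hC hC')
  exact ⟨x, ⟨hxT, hxC⟩, hxC'⟩

theorem IsStatIn.unbounded (hν : ℵ₀ < ν.cof) {T : Set Ordinal} (hT : IsStatIn ν T) :
    ∀ α < ν, ∃ i ∈ T, α < i := by
  intro α hα
  obtain ⟨x, hxT, hx⟩ := hT _ (isClubIn_Ioo (Ordinal.aleph0_le_cof.mp hν.le) hα)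
  exact ⟨x, hxT, hx.1⟩

theorem IsStatIn.subset_trans {T T' : Set Ordinal} (hT : IsStatIn ν T) (h : T ⊆ T') :
    IsStatIn ν T' := fun C hC => ((hT C hC).mono (Set.inter_subset_inter_left _ h))

theorem not_statIn_iff {T : Set Ordinal} :
    ¬ IsStatIn ν T ↔ ∃ C, IsClubIn ν C ∧ T ∩ C = ∅ := by
  unfold IsStatIn
  push_neg
  simp [Set.not_nonempty_iff_eq_empty]

/-- the club of limit ordinals below ν -/
theorem isClubIn_limits (hν : ℵ₀ < ν.cof) :
    IsClubIn ν {i | i < ν ∧ IsSuccLimit i} := by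
  have hlim : IsSuccLimit ν := Ordinal.aleph0_le_cof.mp hν.le
  refine ⟨fun x hx => hx.1, fun α hα => ?_, fun s hsub hne hlt => ?_⟩
  · set t : ℕ → Ordinal := fun n => α + n with ht
    have htlt : ∀ n, t n < ν := by
      intro n
      induction n with
      | zero => simpa [ht] using hα
      | succ n ih =>
        have : t (n+1) = t n + 1 := by
          simp [ht, Nat.cast_succ, add_assoc]
        rw [this]
        exact hlim.succ_lt ih
    have hbdd : BddAbove (Set.range t) := ⟨ν, fun y ⟨n, hn⟩ => hn ▸ (htlt n).le⟩
    have hmono : ∀ n, t n < t (n + 1) := by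
      intro n
      have : t (n+1) = t n + 1 := by
        simp [ht, Nat.cast_succ, add_assoc]
      rw [this]; exact lt_succ _
    set β := ⨆ n, t n with hβ
    have hβν : β < ν := Ordinal.iSup_lt_ord_lift (by simpa using hν) htlt
    have hαβ : α < β := (hmono 0).trans_le (le_ciSup hbdd 1) |>.trans_eq' (by simp [ht])
    refine ⟨β, ⟨hβν, isSuccLimit_of_ne_zero_succ_lt ?_ fun x hx => ?_⟩, hαβ⟩
    · exact fun h0 => absurd (h0 ▸ hαβ) (not_lt_zero (a := α))
    · obtain ⟨y, ⟨n, hn⟩, hxy⟩ := exists_lt_of_lt_csSup ⟨t 0, Set.mem_range_self 0⟩ hx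
      have : succ x ≤ t n := by rw [← hn] at hxy; exact succ_le_of_lt hxy
      exact this.trans_lt ((hmono n).trans_le (le_ciSup hbdd (n+1)))
  · rcases Classical.em (sSup s ∈ s) with h | h
    · exact hsub h
    refine ⟨hlt, isSuccLimit_of_ne_zero_succ_lt ?_ fun x hx => ?_⟩
    · obtain ⟨y, hy⟩ := hne
      intro h0
      have : y ≤ sSup s := le_csSup (bddAbove_of_lt s ν fun z hz => (hsub hz).1) hy
      rcases this.lt_or_eq with h' | h'
      · exact not_lt_zero (a := y) (h0 ▸ h')
      · exact h (h' ▸ hy)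
    · obtain ⟨y, hy, hxy⟩ := exists_lt_of_lt_csSup hne hx
      have hyl : IsSuccLimit y := (hsub hy).2
      exact (hyl.succ_lt hxy).trans_le (le_csSup (bddAbove_of_lt s ν fun z hz => (hsub hz).1) hy)

/-- diagonal intersection -/
def diagInter (ν : Ordinal) (C : Ordinal → Set Ordinal) : Set Ordinal :=
  {i | i < ν ∧ ∀ γ < i, i ∈ C γ}

theorem isClubIn_diagInter (hν : ℵ₀ < ν.cof) (hcard : ∀ x < ν, x.card < ν.cof)
    {C : Ordinal → Set Ordinal} (hC : ∀ γ < ν, IsClubIn ν (C γ)) :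
    IsClubIn ν (diagInter ν C) := by
  have hlim : IsSuccLimit ν := Ordinal.aleph0_le_cof.mp hν.le
  -- the partial intersections are clubs
  have hD : ∀ x < ν, IsClubIn ν (Set.Iio ν ∩ ⋂ t : x.ToType, C (((@Ordinal.ToType.mk x).symm t).val)) := by
    intro x hx
    refine isClubIn_iInter hν ?_ fun t => hC _ (((@Ordinal.ToType.mk x).symm t).2.trans hx)
    rw [Cardinal.mk_toType]; exact hcard x hx
  refine ⟨fun x hx => hx.1, fun α hα => ?_, fun s hsub hne hlt => ?_⟩
  · set g : Ordinal → Ordinal := fun x =>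
      if h : x < ν then choose ((hD x h).2.1 x h) else 0 with hg
    have hgmem : ∀ x (hx : x < ν),
        g x ∈ Set.Iio ν ∩ ⋂ t : x.ToType, C (((@Ordinal.ToType.mk x).symm t).val) := by
      intro x hx
      simp only [hg, dif_pos hx]
      exact (choose_spec ((hD x hx).2.1 x hx)).1
    have hggt : ∀ x (hx : x < ν), x < g x := by
      intro x hx
      simp only [hg, dif_pos hx]
      exact (choose_spec ((hD x hx).2.1 x hx)).2
    have hgC : ∀ x (hx : x < ν) γ, γ < x → g x ∈ C γ := by
      intro x hx γ hγ
      have := (hgmem x hx).2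
      rw [Set.mem_iInter] at this
      have h2 := this ((@Ordinal.ToType.mk x) ⟨γ, hγ⟩)
      simpa using h2
    have hglt : ∀ x (hx : x < ν), g x < ν := fun x hx => (hgmem x hx).1
    set t : ℕ → Ordinal := fun n => g^[n] α with ht
    have htsucc : ∀ n, t (n + 1) = g (t n) := fun n => Function.iterate_succ_apply' g n α
    have htlt : ∀ n, t n < ν := by
      intro n
      induction n with
      | zero => exact hα
      | succ n ih => rw [show t (n+1) = g (t n) from htsucc n]; exact hglt _ ih
    have hmono : ∀ n, t n < t (n + 1) := fun n => (htsucc n) ▸ hggt (t n) (htlt n)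
    have hmono' : ∀ m n, m ≤ n → t m ≤ t n := by
      intro m n h
      induction n with
      | zero => simp_all
      | succ n ih =>
        rcases Nat.lt_or_ge m (n+1) with h' | h'
        · exact (ih (Nat.lt_succ_iff.1 h')).trans (hmono n).le
        · have : m = n + 1 := le_antisymm h h'
          exact this ▸ le_refl _
    have hbdd : BddAbove (Set.range t) := ⟨ν, fun y ⟨n, hn⟩ => hn ▸ (htlt n).le⟩
    set β := ⨆ n, t n with hβ
    have hβν : β < ν := Ordinal.iSup_lt_ord_lift (by simpa using hν) htlt
    have hαβ : α < β := (hmono 0).trans_le (le_ciSup hbdd 1)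
    refine ⟨β, ⟨hβν, fun γ hγ => ?_⟩, hαβ⟩
    obtain ⟨y, ⟨n, hn⟩, hγy⟩ := exists_lt_of_lt_csSup ⟨t 0, Set.mem_range_self 0⟩ hγ
    rw [← hn] at hγy
    -- γ < t n, so for all m ≥ n, t (m+1) ∈ C γ
    set u : ℕ → Ordinal := fun m => t (n + m + 1) with hu
    have huC : ∀ m, u m ∈ C γ := by
      intro m
      rw [hu]
      simp only
      rw [htsucc (n + m)]
      exact hgC _ (htlt _) γ (hγy.trans_le (hmono' n (n+m) (Nat.le_add_right n m)))
    have hukey : (⨆ m, u m) = β := by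
      apply le_antisymm
      · exact ciSup_le fun m => le_ciSup hbdd (n + m + 1)
      · refine ciSup_le fun m => ?_
        have hbdu : BddAbove (Set.range u) := ⟨ν, fun y ⟨m, hm⟩ => hm ▸ (htlt _).le⟩
        exact (hmono' m (n + m + 1) (by omega)).trans (le_ciSup hbdu m)
    have := mem_of_iSup_seq (hC γ (hγ.trans hβν)) u huC (by rw [hukey]; exact hβν)
    rwa [hukey] at this
  · rcases Classical.em (sSup s ∈ s) with h | h
    · exact hsub h
    refine ⟨hlt, fun γ hγ => ?_⟩
    obtain ⟨x₀, hx₀, hγx₀⟩ := exists_lt_of_lt_csSup hne hγ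
    set s' := s ∩ Set.Ioi γ with hs'
    have hs'sub : s' ⊆ C γ := by
      rintro x ⟨hxs, hxγ⟩
      exact (hsub hxs).2 γ hxγ
    have hbdds : BddAbove s := bddAbove_of_lt s ν fun z hz => (hsub hz).1
    have hsup' : sSup s' = sSup s := by
      apply le_antisymm
      · exact csSup_le ⟨x₀, hx₀, hγx₀⟩ fun y hy => le_csSup hbdds hy.1
      · refine csSup_le hne fun y hy => ?_
        rcases le_or_gt y γ with h' | h'
        · exact (h'.trans_lt hγx₀).le.trans
            (le_csSup (hbdds.mono Set.inter_subset_left) ⟨hx₀, hγx₀⟩)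
        · exact le_csSup (hbdds.mono Set.inter_subset_left) ⟨hy, h'⟩
    have := (hC γ (hγ.trans hlt)).2.2 s' hs'sub ⟨x₀, hx₀, hγx₀⟩ (hsup' ▸ hlt)
    rwa [hsup'] at this

/-- Fodor's lemma -/
theorem fodor (hν : ℵ₀ < ν.cof) (hcard : ∀ x < ν, x.card < ν.cof)
    {T : Set Ordinal} (hT : IsStatIn ν T)
    {f : Ordinal → Ordinal} (hf : ∀ i ∈ T, f i < i) :
    ∃ γ, IsStatIn ν {i | i ∈ T ∧ f i = γ} := by
  by_contra hcon
  push_neg at hcon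
  have hcon' : ∀ γ, ∃ C, IsClubIn ν C ∧ {i | i ∈ T ∧ f i = γ} ∩ C = ∅ :=
    fun γ => not_statIn_iff.1 (hcon γ)
  set C : Ordinal → Set Ordinal := fun γ => choose (hcon' γ) with hCdef
  have hC : ∀ γ, IsClubIn ν (C γ) ∧ {i | i ∈ T ∧ f i = γ} ∩ C γ = ∅ :=
    fun γ => choose_spec (hcon' γ)
  obtain ⟨i, hiT, hiD⟩ := hT _ (isClubIn_diagInter hν hcard (fun γ _ => (hC γ).1))
  have hfi : f i < i := hf i hiT
  have : i ∈ C (f i) := hiD.2 (f i) hfi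
  have : i ∈ {j | j ∈ T ∧ f j = f i} ∩ C (f i) := ⟨⟨hiT, rfl⟩, this⟩
  rw [(hC (f i)).2] at this
  exact this

end
end SilverAux

namespace SilverAux
universe u
noncomputable section
open Classical

def embOf {a b : Ordinal.{u}} (h : a.card ≤ b.card) : a.ToType ↪ b.ToType :=
  Classical.choice ((Cardinal.le_def _ _).1 (by rwa [Cardinal.mk_toType, Cardinal.mk_toType]))

theorem arith_bound {κc a b : Cardinal.{u}} (hκ : κc.IsStrongLimit) (hℵ : ℵ₀ < κc)
    (ha : a < κc) (hb : b < κc) : 2 ^ b * (a + 1) ^ b < κc := by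
  set θ := max (max a b) ℵ₀ with hθ
  have hθinf : ℵ₀ ≤ θ := le_max_right _ _
  have hθκ : θ < κc := max_lt (max_lt ha hb) hℵ
  have h2θ : 2 ^ θ < κc := hκ.two_power_lt hθκ
  have h2θinf : ℵ₀ ≤ 2 ^ θ := hθinf.trans (Cardinal.cantor θ).le
  have h1 : (2 : Cardinal) ^ b ≤ 2 ^ θ :=
    Cardinal.power_le_power_left two_ne_zero ((le_max_right a b).trans (le_max_left _ _))
  have ha1 : a + 1 ≤ 2 ^ θ := by
    calc a + 1 ≤ θ + θ :=
          add_le_add ((le_max_left a b).trans (le_max_left _ _)) (Cardinal.one_le_aleph0.trans hθinf)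
      _ = θ := Cardinal.add_eq_self hθinf
      _ ≤ 2 ^ θ := (Cardinal.cantor θ).le
  have h2 : (a + 1) ^ b ≤ 2 ^ θ := by
    calc (a + 1) ^ b ≤ (2 ^ θ) ^ θ := by
          refine le_trans (Cardinal.power_le_power_right ha1) ?_
          exact Cardinal.power_le_power_left (Cardinal.power_ne_zero θ two_ne_zero)
            ((le_max_right a b).trans (le_max_left _ _))
      _ = 2 ^ (θ * θ) := (Cardinal.power_mul).symm
      _ = 2 ^ θ := by rw [Cardinal.mul_eq_self hθinf]
  calc 2 ^ b * (a + 1) ^ b ≤ 2 ^ θ * 2 ^ θ := mul_le_mul' h1 h2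
    _ = 2 ^ θ := Cardinal.mul_eq_self h2θinf
    _ < κc := h2θ

variable {ν : Ordinal.{u}} {κc : Cardinal.{u}} {c : Ordinal.{u} → Ordinal.{u}}
  {S : Set Ordinal.{u}} {P : Type u}

theorem below_small (hν : ℵ₀ < ν.cof) (hcard : ∀ x < ν, x.card < ν.cof)
    (hκsl : κc.IsStrongLimit) (hκℵ : ℵ₀ < κc) (hμκ : ν.card < κc)
    (hcκ : ∀ i < ν, (c i).card < κc)
    (hcont : ∀ i, i < ν → IsSuccLimit i → ∀ x < c i, ∃ j < i, x < c j)
    (hSsub : S ⊆ Set.Iio ν)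
    (F : P → Ordinal → Ordinal)
    (hFb : ∀ p, ∀ i ∈ S, F p i < (Order.succ (c i).card).ord)
    (hFad : ∀ p q : P, p ≠ q → ∃ α < ν, ∀ i ∈ S, α < i → F p i ≠ F q i)
    (p : P) :
    #{q : P | IsStatIn ν {i | i ∈ S ∧ F q i < F p i}} ≤ κc := by
  have hlim : IsSuccLimit ν := Ordinal.aleph0_le_cof.mp hν.le
  have hνne : Nonempty ν.ToType := Ordinal.nonempty_toType_iff.2 hlim.pos.ne'
  have hμinf : ℵ₀ ≤ ν.card := hν.le.trans (Ordinal.cof_le_card ν)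
  -- cardinal bound for values of F p on S
  have card_le : ∀ i ∈ S, (F p i).card ≤ (c i).card := by
    intro i hi
    have := hFb p i hi
    rw [Cardinal.lt_ord] at this
    exact Order.lt_succ_iff.1 this
  -- coded values
  set v : P → Ordinal → Ordinal := fun q i =>
    if h : i ∈ S ∧ F q i < F p i then
      ((@Ordinal.ToType.mk (c i)).symm
        (embOf (card_le i h.1) ((@Ordinal.ToType.mk (F p i)) ⟨F q i, h.2⟩))).val
    else 0 with hv
  have hvlt : ∀ q i (h : i ∈ S ∧ F q i < F p i), v q i < c i := by
    intro q i h
    simp only [hv, dif_pos h]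
    exact ((@Ordinal.ToType.mk (c i)).symm _).2
  have hvinj : ∀ q q' i (h : i ∈ S ∧ F q i < F p i) (h' : i ∈ S ∧ F q' i < F p i),
      v q i = v q' i → F q i = F q' i := by
    intro q q' i h h' he
    simp only [hv, dif_pos h, dif_pos h'] at he
    have h1 := (@Ordinal.ToType.mk (c i)).symm.injective (Subtype.ext he)
    have h2 := (embOf (card_le i h.1)).injective h1
    have h3 := (@Ordinal.ToType.mk (F p i)).injective h2
    exact congrArg Subtype.val h3
  -- the key existence of homogeneous stationary data
  have key : ∀ q : P, IsStatIn ν {i | i ∈ S ∧ F q i < F p i} →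
      ∃ jT : Ordinal × Set Ordinal, jT.1 < ν ∧ jT.2 ⊆ Set.Iio ν ∧ IsStatIn ν jT.2 ∧
        ∀ i ∈ jT.2, (i ∈ S ∧ F q i < F p i) ∧ v q i < c jT.1 := by
    intro q hq
    set T₁ := {i | i ∈ S ∧ F q i < F p i} ∩ {i | i < ν ∧ IsSuccLimit i} with hT₁
    have hT₁stat : IsStatIn ν T₁ := hq.inter_club hν (isClubIn_limits hν)
    set r : Ordinal → Ordinal := fun i => if h : ∃ j, j < i ∧ v q i < c j then choose h else 0
      with hr
    have hrex : ∀ i ∈ T₁, ∃ j, j < i ∧ v q i < c j := by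
      rintro i ⟨hi0, hiν, hilim⟩
      obtain ⟨j, hj, hvj⟩ := hcont i hiν hilim (v q i) (hvlt q i hi0)
      exact ⟨j, hj, hvj⟩
    have hrlt : ∀ i ∈ T₁, r i < i ∧ v q i < c (r i) := by
      intro i hi
      simp only [hr, dif_pos (hrex i hi)]
      exact choose_spec (hrex i hi)
    obtain ⟨γ, hγstat⟩ := fodor hν hcard hT₁stat (fun i hi => (hrlt i hi).1)
    obtain ⟨i₀, hi₀⟩ := hγstat _ (isClubIn_Iio hlim)
    refine ⟨(γ, {i | i ∈ T₁ ∧ r i = γ}), ?_, ?_, hγstat, ?_⟩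
    · exact lt_trans (hi₀.1.2 ▸ (hrlt i₀ hi₀.1.1).1) hi₀.2
    · exact fun i hi => hi.1.2.1
    · rintro i ⟨hiT₁, hrγ⟩
      exact ⟨hiT₁.1, hrγ ▸ (hrlt i hiT₁).2⟩
  -- choice of the data
  set JT : P → Ordinal × Set Ordinal := fun q =>
    if h : ∃ jT : Ordinal × Set Ordinal, jT.1 < ν ∧ jT.2 ⊆ Set.Iio ν ∧ IsStatIn ν jT.2 ∧
        ∀ i ∈ jT.2, (i ∈ S ∧ F q i < F p i) ∧ v q i < c jT.1 then choose h else (0, ∅)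
    with hJT
  have hJTspec : ∀ q : P, IsStatIn ν {i | i ∈ S ∧ F q i < F p i} →
      (JT q).1 < ν ∧ (JT q).2 ⊆ Set.Iio ν ∧ IsStatIn ν (JT q).2 ∧
        ∀ i ∈ (JT q).2, (i ∈ S ∧ F q i < F p i) ∧ v q i < c (JT q).1 := by
    intro q hq
    have h := key q hq
    simp only [hJT, dif_pos h]
    exact choose_spec h
  set B := {q : P | IsStatIn ν {i | i ∈ S ∧ F q i < F p i}} with hB
  set eν := @Ordinal.ToType.mk ν with heν
  set G : ν.ToType → Set P := fun j => {q | q ∈ B ∧ (JT q).1 = (eν.symm j).val} with hG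
  have hcover : B ⊆ ⋃ j, G j := by
    intro q hq
    refine Set.mem_iUnion.2 ⟨eν ⟨(JT q).1, (hJTspec q hq).1⟩, hq, ?_⟩
    simp [heν]
  have hGsmall : ∀ j, #(G j) ≤ κc := by
    intro j
    set jo := ((eν.symm j : Iio ν) : Ordinal) with hjo
    have hjoν : jo < ν := (eν.symm j).2
    set Tgt := Set ν.ToType × (ν.ToType → ((c jo).ToType ⊕ Unit)) with hTgt
    set Ψ : ↥(G j) → Tgt := fun q =>
      ({t | ((eν.symm t : Iio ν) : Ordinal) ∈ (JT q.1).2},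
       fun t => if h : v q.1 ((eν.symm t : Iio ν) : Ordinal) < c jo ∧
            ((eν.symm t : Iio ν) : Ordinal) ∈ (JT q.1).2 then
          Sum.inl ((@Ordinal.ToType.mk (c jo)) ⟨v q.1 ((eν.symm t : Iio ν) : Ordinal), h.1⟩)
        else Sum.inr ()) with hΨ
    have hinj : Function.Injective Ψ := by
      rintro ⟨q, hqB, hqj⟩ ⟨q', hq'B, hq'j⟩ he
      have hPq := hJTspec q hqB
      have hPq' := hJTspec q' hq'B
      have h1 : {t | ((eν.symm t : Iio ν) : Ordinal) ∈ (JT q).2} =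
          {t | ((eν.symm t : Iio ν) : Ordinal) ∈ (JT q').2} := congrArg Prod.fst he
      have hTeq : (JT q).2 = (JT q').2 := by
        ext i
        constructor
        · intro hi
          have hiν : i < ν := hPq.2.1 hi
          have := Set.ext_iff.1 h1 (eν ⟨i, hiν⟩)
          simp only [Set.mem_setOf_eq, OrderIso.symm_apply_apply] at this
          exact this.1 hi
        · intro hi
          have hiν : i < ν := hPq'.2.1 hi
          have := Set.ext_iff.1 h1 (eν ⟨i, hiν⟩)
          simp only [Set.mem_setOf_eq, OrderIso.symm_apply_apply] at this
          exact this.2 hi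
      have h2 := congrArg Prod.snd he
      refine Subtype.ext ?_
      by_contra hne
      obtain ⟨α, hαν, hdiff⟩ := hFad q q' hne
      obtain ⟨i, hiT, hαi⟩ := (hPq.2.2.1).unbounded hν α hαν
      have hiT' : i ∈ (JT q').2 := hTeq ▸ hiT
      have hceq : c (JT q).1 = c jo := by rw [hqj, hjo]
      have hceq' : c (JT q').1 = c jo := by rw [hq'j, hjo]
      have hci : v q i < c jo ∧ i ∈ (JT q).2 := ⟨hceq ▸ (hPq.2.2.2 i hiT).2, hiT⟩
      have hci' : v q' i < c jo ∧ i ∈ (JT q').2 := ⟨hceq' ▸ (hPq'.2.2.2 i hiT').2, hiT'⟩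
      have hiν : i < ν := hPq.2.1 hiT
      have h3 := congrFun h2 (eν ⟨i, hiν⟩)
      simp only [hΨ, OrderIso.symm_apply_apply] at h3
      rw [dif_pos hci, dif_pos hci'] at h3
      have h4 := Sum.inl.inj h3
      have h5 := (@Ordinal.ToType.mk (c jo)).injective h4
      have h6 : v q i = v q' i := congrArg Subtype.val h5
      have h7 := hvinj q q' i (hPq.2.2.2 i hiT).1 (hPq'.2.2.2 i hiT').1 h6
      exact hdiff i (hPq.2.2.2 i hiT).1.1 hαi h7
    have hle : #(↥(G j)) ≤ #Tgt := Cardinal.mk_le_of_injective hinj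
    have hTgtcard : #Tgt = 2 ^ ν.card * ((c jo).card + 1) ^ ν.card := by
      rw [hTgt, Cardinal.mk_prod, Cardinal.mk_set, Cardinal.mk_toType,
        Cardinal.mk_arrow, Cardinal.mk_sum, Cardinal.mk_toType]
      simp [Cardinal.lift_id]
    refine hle.trans ?_
    rw [hTgtcard]
    exact (arith_bound hκsl hκℵ (hcκ jo hjoν) hμκ).le
  calc #(↥B) ≤ #(↥(⋃ j, G j)) := Cardinal.mk_le_mk_of_subset hcover
    _ ≤ #ν.ToType * ⨆ j, #(G j) := Cardinal.mk_iUnion_le G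
    _ ≤ ν.card * κc := by
        refine mul_le_mul' (le_of_eq (Cardinal.mk_toType ν)) ?_
        exact ciSup_le' hGsmall
    _ ≤ κc := by
        rw [Cardinal.mul_eq_max hμinf hκℵ.le]
        exact max_le hμκ.le le_rfl

end
end SilverAux

namespace SilverAux
universe u
noncomputable section
open Classical

variable {ν : Ordinal.{u}} {κc : Cardinal.{u}} {c : Ordinal.{u} → Ordinal.{u}}
  {S : Set Ordinal.{u}} {P : Type u}

theorem ad_counting (hν : ℵ₀ < ν.cof) (hcard : ∀ x < ν, x.card < ν.cof)
    (hκsl : κc.IsStrongLimit) (hκℵ : ℵ₀ < κc) (hμκ : ν.card < κc)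
    (hcκ : ∀ i < ν, (c i).card < κc)
    (hcont : ∀ i, i < ν → IsSuccLimit i → ∀ x < c i, ∃ j < i, x < c j)
    (hSsub : S ⊆ Set.Iio ν) (hS : IsStatIn ν S)
    (F : P → Ordinal → Ordinal)
    (hFb : ∀ p, ∀ i ∈ S, F p i < (Order.succ (c i).card).ord)
    (hFad : ∀ p q : P, p ≠ q → ∃ α < ν, ∀ i ∈ S, α < i → F p i ≠ F q i) :
    Cardinal.mk P ≤ Order.succ κc := by
  have hlim : IsSuccLimit ν := Ordinal.aleph0_le_cof.mp hν.le
  set Below : P → Set P := fun p => {q : P | IsStatIn ν {i | i ∈ S ∧ F q i < F p i}}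
    with hBelow
  have hsmall : ∀ p, #(Below p) ≤ κc := fun p =>
    below_small hν hcard hκsl hκℵ hμκ hcκ hcont hSsub F hFb hFad p
  have hcomp : ∀ p q : P, p ≠ q → q ∈ Below p ∨ p ∈ Below q := by
    intro p q hne
    by_contra hcon
    push_neg at hcon
    obtain ⟨C₁, hC₁, hC₁e⟩ := not_statIn_iff.1 hcon.1
    obtain ⟨C₂, hC₂, hC₂e⟩ := not_statIn_iff.1 hcon.2
    obtain ⟨α, hαν, hdiff⟩ := hFad p q hne
    have hclub : IsClubIn ν ((C₁ ∩ C₂) ∩ Set.Ioo α ν) :=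
      isClubIn_inter hν (isClubIn_inter hν hC₁ hC₂) (isClubIn_Ioo hlim hαν)
    obtain ⟨i, hiS, ⟨hi1, hi2⟩, hiα, _⟩ := hS _ hclub
    rcases lt_trichotomy (F q i) (F p i) with h | h | h
    · rw [Set.eq_empty_iff_forall_notMem] at hC₁e
      exact hC₁e i ⟨⟨hiS, h⟩, hi1⟩
    · exact hdiff i hiS hiα h.symm
    · rw [Set.eq_empty_iff_forall_notMem] at hC₂e
      exact hC₂e i ⟨⟨hiS, h⟩, hi2⟩
  by_contra hcon
  push_neg at hcon
  obtain ⟨X, hX⟩ := Cardinal.le_mk_iff_exists_set.1 hcon.le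
  set Y := X ∪ ⋃ x : ↥X, Below x.val with hY
  have hXne : Nonempty ↥X := by
    rw [← Cardinal.mk_ne_zero_iff, hX]
    exact (Cardinal.aleph0_pos.trans_le (hκℵ.le.trans (Order.le_succ κc))).ne'
  have hsuccinf : ℵ₀ ≤ Order.succ κc := hκℵ.le.trans (Order.le_succ κc)
  have hYcard : #(↥Y) ≤ Order.succ κc := by
    calc #(↥Y) ≤ #(↥X) + #(↥(⋃ x : ↥X, Below x.val)) := Cardinal.mk_union_le _ _
      _ ≤ Order.succ κc + #(↥X) * ⨆ x : ↥X, #(Below x.val) := by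
          exact add_le_add hX.le (Cardinal.mk_iUnion_le _)
      _ ≤ Order.succ κc + Order.succ κc * κc := by
          refine add_le_add le_rfl (mul_le_mul' hX.le (ciSup_le' fun x => hsmall x.val))
      _ ≤ Order.succ κc + Order.succ κc * Order.succ κc :=
          add_le_add le_rfl (mul_le_mul' le_rfl (Order.le_succ κc))
      _ = Order.succ κc := by
          rw [Cardinal.mul_eq_self hsuccinf, Cardinal.add_eq_self hsuccinf]
  have hYne : Y ≠ Set.univ := by
    intro h
    have : #(↥Y) = #P := by rw [h, Cardinal.mk_univ]
    exact absurd (this ▸ hYcard) (not_le.2 hcon)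
  obtain ⟨w, hw⟩ := (Set.ne_univ_iff_exists_notMem Y).1 hYne
  have hwX : w ∉ X := fun h => hw (Set.mem_union_left _ h)
  have hXB : X ⊆ Below w := by
    intro x hx
    have hxw : w ≠ x := fun h => hwX (h ▸ hx)
    rcases hcomp w x hxw with h | h
    · exact h
    · exact absurd (Set.mem_union_right _ (Set.mem_iUnion.2 ⟨⟨x, hx⟩, h⟩)) hw
  have : Order.succ κc ≤ κc := by
    calc Order.succ κc = #(↥X) := hX.symm
      _ ≤ #(Below w) := Cardinal.mk_le_mk_of_subset hXB
      _ ≤ κc := hsmall w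
  exact absurd this (not_le.2 (Order.lt_succ κc))

end
end SilverAux

open SilverAux in
theorem silver_contrapositive (κ : Cardinal)
    (hsl : κ.IsStrongLimit) (hsing : κ.ord.cof < κ)
    (hunc : Cardinal.aleph0 < κ.ord.cof)
    (hpow : Order.succ κ < 2 ^ κ) :
    ∃ C, IsClubIn κ.ord C ∧
      C ⊆ {α : Ordinal | Order.succ α.card < 2 ^ α.card} := by
  classical
  set μ := κ.ord.cof with hμ
  have hκℵ : ℵ₀ < κ := hunc.trans_le ((Ordinal.cof_le_card κ.ord).trans (by rw [Cardinal.card_ord]))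
  have hordlim : IsSuccLimit κ.ord := Cardinal.isSuccLimit_ord hκℵ.le
  have hμreg : μ.IsRegular := Cardinal.isRegular_cof hordlim
  set ν := μ.ord with hνdef
  have hνcof : ν.cof = μ := hμreg.cof_eq
  have hν : ℵ₀ < ν.cof := hνcof ▸ hunc
  have hνlim : IsSuccLimit ν := Cardinal.isSuccLimit_ord hμreg.aleph0_le
  have hcard : ∀ x < ν, x.card < ν.cof := fun x hx => hνcof ▸ (Cardinal.lt_ord.1 hx)
  have hνcard : ν.card = μ := Cardinal.card_ord μ
  -- fundamental sequence for κ.ord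
  obtain ⟨f, hf⟩ := Ordinal.exists_fundamental_sequence κ.ord
  set F0 : Ordinal → Ordinal := fun j => if h : j < ν then f j h + 1 else 0 with hF0
  set c : Ordinal → Ordinal := fun i => sSup (F0 '' Set.Iio i) with hc
  have hfκ : ∀ j (h : j < ν), f j h < κ.ord := by
    intro j h
    have := Ordinal.lt_blsub (fun b hb => f b hb) j h
    rwa [hf.2.2] at this
  have hF0κ : ∀ j, F0 j < κ.ord := by
    intro j
    simp only [hF0]
    split
    · rename_i h
      rw [Ordinal.add_one_eq_succ]
      exact hordlim.succ_lt (hfκ j h)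
    · exact hordlim.pos
  have hbdd : ∀ i, BddAbove (F0 '' Set.Iio i) :=
    fun i => ⟨κ.ord, fun y ⟨j, _, hj⟩ => hj ▸ (hF0κ j).le⟩
  have hcκ : ∀ i < ν, c i < κ.ord := by
    intro i hi
    have h1 : c i ≤ f i hi := by
      refine csSup_le' ?_
      rintro y ⟨j, hj, rfl⟩
      have hjν : j < ν := hj.trans hi
      rw [hF0]
      simp only [dif_pos hjν, Ordinal.add_one_eq_succ]
      exact Order.succ_le_of_lt (hf.2.1 hjν hi hj)
    exact h1.trans_lt (hfκ i hi)
  have hmono : ∀ j i, j ≤ i → c j ≤ c i := by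
    intro j i hji
    exact csSup_le' fun y hy => le_csSup (hbdd i)
      (Set.image_mono (f := F0) (Set.Iio_subset_Iio hji) hy)
  have hF0c : ∀ j i, j < i → F0 j ≤ c i := fun j i hji => le_csSup (hbdd i) ⟨j, hji, rfl⟩
  have hcof : ∀ x < κ.ord, ∃ j < ν, x < c j := by
    intro x hx
    rw [← hf.2.2, Ordinal.lt_blsub_iff] at hx
    obtain ⟨j, hj, hxf⟩ := hx
    refine ⟨j + 1, hνlim.succ_lt hj, ?_⟩
    have : x < F0 j := by
      rw [hF0]; simp only [dif_pos hj]
      exact hxf.trans_lt (by rw [dif_pos (show j < ν from hj)]; exact lt_add_one _)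
    exact this.trans_le (hF0c j (j+1) (lt_add_one j))
  have hcont : ∀ i, i < ν → IsSuccLimit i → ∀ x < c i, ∃ j < i, x < c j := by
    intro i hiν hilim x hx
    obtain ⟨y, ⟨j₀, hj₀, rfl⟩, hxy⟩ := exists_lt_of_lt_csSup
      ⟨F0 0, Set.mem_image_of_mem F0 (Set.mem_Iio.2 hilim.pos)⟩ hx
    exact ⟨j₀ + 1, hilim.succ_lt (Set.mem_Iio.1 hj₀), hxy.trans_le (hF0c j₀ (j₀+1) (lt_add_one j₀))⟩
  set S : Set Ordinal := {i | i < ν ∧ ¬ (Order.succ (c i).card < 2 ^ (c i).card)} with hS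
  by_cases hstat : IsStatIn ν S
  · -- stationary bad set: contradiction with hpow via ad_counting
    exfalso
    have hκc : ∀ i < ν, (c i).card < κ := fun i hi => Cardinal.lt_ord.1 (hcκ i hi)
    set eκ := @Ordinal.ToType.mk κ.ord with heκ
    have hSle : ∀ i ∈ S, 2 ^ (c i).card ≤ Order.succ (c i).card := fun i hi => not_lt.1 hi.2
    have embNE : ∀ i, i ∈ S →
        Nonempty (Set ((c i).ToType) ↪ ((Order.succ (c i).card).ord).ToType) := by
      intro i hi
      refine (Cardinal.le_def _ _).1 ?_
      rw [Cardinal.mk_set, Cardinal.mk_toType, Cardinal.mk_toType, Cardinal.card_ord]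
      exact hSle i hi
    set F : Set κ.ord.ToType → Ordinal → Ordinal := fun A i =>
      if h : i ∈ S ∧ c i < κ.ord then
        ((@Ordinal.ToType.mk ((Order.succ (c i).card).ord)).symm
          ((Classical.choice (embNE i h.1))
            {y : (c i).ToType |
              eκ ⟨((@Ordinal.ToType.mk (c i)).symm y).val,
                lt_trans (Set.mem_Iio.1 ((@Ordinal.ToType.mk (c i)).symm y).2) h.2⟩ ∈ A})).val
      else 0 with hF
    have hFb : ∀ A, ∀ i ∈ S, F A i < (Order.succ (c i).card).ord := by
      intro A i hi
      have hcond : i ∈ S ∧ c i < κ.ord := ⟨hi, hcκ i hi.1⟩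
      simp only [hF, dif_pos hcond]
      exact Set.mem_Iio.1 ((@Ordinal.ToType.mk ((Order.succ (c i).card).ord)).symm _).2
    have hFad : ∀ A B : Set κ.ord.ToType, A ≠ B →
        ∃ α < ν, ∀ i ∈ S, α < i → F A i ≠ F B i := by
      intro A B hAB
      have hx : ∃ x, ¬ (x ∈ A ↔ x ∈ B) := by
        by_contra hcon
        push_neg at hcon
        exact hAB (Set.ext hcon)
      obtain ⟨x, hxne⟩ := hx
      set β : Ordinal := ((eκ.symm x : Set.Iio κ.ord) : Ordinal) with hβ
      have hβκ : β < κ.ord := Set.mem_Iio.1 (eκ.symm x).2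
      obtain ⟨j, hjν, hβj⟩ := hcof β hβκ
      refine ⟨j, hjν, fun i hiS hji hFeq => ?_⟩
      have hcond : i ∈ S ∧ c i < κ.ord := ⟨hiS, hcκ i hiS.1⟩
      simp only [hF, dif_pos hcond] at hFeq
      have h1 := (@Ordinal.ToType.mk ((Order.succ (c i).card).ord)).symm.injective
        (Subtype.ext hFeq)
      have h2 := (Classical.choice (embNE i hcond.1)).injective h1
      have hβci : β < c i := hβj.trans_le (hmono j i hji.le)
      have h3 := Set.ext_iff.1 h2 ((@Ordinal.ToType.mk (c i)) ⟨β, Set.mem_Iio.2 hβci⟩)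
      simp only [Set.mem_setOf_eq, OrderIso.symm_apply_apply] at h3
      apply hxne
      have hxx : ∀ (pf : β ∈ Set.Iio κ.ord), eκ ⟨β, pf⟩ = x := by
        intro pf
        have h4 : (⟨β, pf⟩ : Set.Iio κ.ord) = eκ.symm x := Subtype.ext rfl
        rw [h4, OrderIso.apply_symm_apply]
      rwa [hxx] at h3
    have hScond : S ⊆ Set.Iio ν := fun i hi => hi.1
    have hcount := ad_counting hν hcard hsl hκℵ (hνcard ▸ hsing) hκc hcont
      hScond hstat F hFb hFad
    rw [Cardinal.mk_set, Cardinal.mk_toType, Cardinal.card_ord] at hcount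
    exact absurd hpow (not_lt.2 hcount)
  · -- non-stationary bad set: extract the club
    obtain ⟨D, hD, hDS⟩ := not_statIn_iff.1 hstat
    refine ⟨c '' D, ⟨?_, ?_, ?_⟩, ?_⟩
    · rintro x ⟨y, hy, rfl⟩
      exact hcκ y (hD.1 hy)
    · intro α hα
      obtain ⟨j, hjν, hαj⟩ := hcof α hα
      obtain ⟨y, hyD, hjy⟩ := hD.2.1 j hjν
      exact ⟨c y, ⟨y, hyD, rfl⟩, hαj.trans_le (hmono j y hjy.le)⟩
    · intro s hsub hne hlt
      obtain ⟨x₀, hx₀⟩ := hne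
      obtain ⟨y₀, hy₀D, hy₀⟩ := hsub hx₀
      set d := {y ∈ D | c y ∈ s} with hd
      have hdsub : d ⊆ D := fun y hy => hy.1
      have hdne : d.Nonempty := ⟨y₀, hy₀D, hy₀ ▸ hx₀⟩
      have hdbdd : BddAbove d := ⟨ν, fun y hy => (hD.1 (hdsub hy)).le⟩
      have hsbdd : BddAbove s := ⟨κ.ord, fun x hx => by
        obtain ⟨y, hy, rfl⟩ := hsub hx
        exact (hcκ y (hD.1 hy)).le⟩
      set δ := sSup d with hδ
      have hcys : ∀ y ∈ d, c y ≤ sSup s := fun y hy => le_csSup hsbdd hy.2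
      have hδν : δ < ν := by
        by_contra hcon
        push_neg at hcon
        have : κ.ord ≤ sSup s := by
          refine le_of_forall_lt fun α hα => ?_
          obtain ⟨j, hjν, hαj⟩ := hcof α hα
          obtain ⟨y, hyd, hjy⟩ := exists_lt_of_lt_csSup hdne (hjν.trans_le hcon)
          exact lt_of_lt_of_le (hαj.trans_le (hmono j y hjy.le)) (hcys y hyd)
        exact absurd hlt (not_lt.2 this)
      have hδD : δ ∈ D := hD.2.2 d hdsub hdne hδν
      have hyδ : ∀ y ∈ d, y ≤ δ := fun y hy => le_csSup hdbdd hy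
      have hsup : sSup s = c δ := by
        apply le_antisymm
        · refine csSup_le ⟨x₀, hx₀⟩ fun x hx => ?_
          obtain ⟨y, hyd, rfl⟩ : ∃ y ∈ d, c y = x := by
            obtain ⟨y, hyD, rfl⟩ := hsub hx
            exact ⟨y, ⟨hyD, hx⟩, rfl⟩
          exact hmono y δ (hyδ y hyd)
        · rcases Classical.em (δ ∈ d) with h | h
          · exact hcys δ h
          · have hδlim : IsSuccLimit δ := by
              refine isSuccLimit_of_ne_zero_succ_lt ?_ ?_
              · intro h0
                obtain ⟨y, hyd⟩ := hdne
                have := hyδ y hyd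
                rw [h0, nonpos_iff_eq_zero] at this
                exact h (by rw [h0, ← this]; exact hyd)
              · intro β hβ
                obtain ⟨y, hyd, hβy⟩ := exists_lt_of_lt_csSup hdne hβ
                have hyδ' : y < δ := lt_of_le_of_ne (hyδ y hyd) (fun he => h (he ▸ hyd))
                exact lt_of_le_of_lt (Order.succ_le_of_lt hβy) hyδ'
            refine le_of_forall_lt fun x hx => ?_
            obtain ⟨j, hjδ, hxj⟩ := hcont δ hδν hδlim x hx
            obtain ⟨y, hyd, hjy⟩ := exists_lt_of_lt_csSup hdne hjδ
            exact lt_of_lt_of_le (hxj.trans_le (hmono j y hjy.le)) (hcys y hyd)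
      exact hsup ▸ ⟨δ, hδD, rfl⟩
    · rintro x ⟨y, hyD, rfl⟩
      have hyν : y < ν := hD.1 hyD
      have hyS : y ∉ S := by
        intro hyS
        have : y ∈ S ∩ D := ⟨hyS, hyD⟩
        rw [hDS] at this
        exact this
      rw [hS] at hyS
      simp only [Set.mem_setOf_eq, not_and, not_not] at hyS
      exact hyS hyν
end
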